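/- arXiv:0801.1810 — 3 statements merged into one kernel-verified Lean document; each statement's English description precedes it below -/
import Mathlib

section
/- Let k be an even integer and s ∈ ℂ. For every g = [[a, b],[c, d]] ∈ SL₂(ℝ), setting g^# := [[d, b],[c, a]] ∈ SL₂(ℝ), one has for all Z ∈ ℍ₂: Φ_{k,s}(g•(Z)) · χ_{k,s}(g•, Z) = Φ_{k,s}((g^#)_•(Z)) · χ_{k,s}((g^#)_•, Z). -/
open Matrix Complex Filter Topology

noncomputable section

abbrev M2C := Matrix (Fin 2) (Fin 2) ℂ
abbrev M2R := Matrix (Fin 2) (Fin 2) ℝ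
abbrev M2Q := Matrix (Fin 2) (Fin 2) ℚ
abbrev M4R := Matrix (Fin 2 ⊕ Fin 2) (Fin 2 ⊕ Fin 2) ℝ

/-- The standard symplectic form of degree 2. -/
def J4 : M4R := Matrix.fromBlocks 0 1 (-1) 0

/-- `g` is a real symplectic matrix of degree 2. -/
def IsSymplectic (g : M4R) : Prop := gᵀ * J4 * g = J4

/-- all entries of `g` are integers -/
def IsIntegral4 (g : M4R) : Prop := ∀ i j, ∃ n : ℤ, g i j = (n : ℝ)

/-- The Siegel modular group `Γ₂ = Sp₂(ℤ)` (as a set of real matrices). -/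
def Sp2Z : Set M4R := {g | IsSymplectic g ∧ IsIntegral4 g}

/-- `Γ_{2,0}`: elements of `Γ₂` whose lower-left 2×2 block is `0`. -/
def Gamma20 : Set M4R := {g | g ∈ Sp2Z ∧ Matrix.toBlocks₂₁ g = 0}

/-- entrywise coercion of a real 4×4 matrix to a complex one -/
def mapC (g : M4R) : Matrix (Fin 2 ⊕ Fin 2) (Fin 2 ⊕ Fin 2) ℂ := g.map (fun x => (x : ℂ))

/-- The action `g(Z) = (AZ+B)(CZ+D)⁻¹` of `Sp₂(ℝ)` on the Siegel upper half space. -/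
def smul4 (g : M4R) (Z : M2C) : M2C :=
  ((mapC g).toBlocks₁₁ * Z + (mapC g).toBlocks₁₂) * ((mapC g).toBlocks₂₁ * Z + (mapC g).toBlocks₂₂)⁻¹

/-- The factor of automorphy `j(g,Z) = det (CZ + D)`. -/
def jfac (g : M4R) (Z : M2C) : ℂ := ((mapC g).toBlocks₂₁ * Z + (mapC g).toBlocks₂₂).det

/-- entrywise imaginary part -/
def ImM (Z : M2C) : M2R := Z.map Complex.im

/-- The Siegel upper half space of degree 2. -/
def SiegelH2 : Set M2C := {Z | Z.IsSymm ∧ (ImM Z).PosDef}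

/-- `δ(Z) := det (Im Z)` -/
def Hdelta (Z : M2C) : ℝ := (ImM Z).det

/-- The summand `j(g,Z)^{-k} δ(g(Z))^s` of the Siegel Eisenstein series. -/
def eisSummand (k : ℤ) (s : ℂ) (g : M4R) (Z : M2C) : ℂ :=
  jfac g Z ^ (-k) * ((Hdelta (smul4 g Z) : ℂ)) ^ s

/-- `Γ = SL₂(ℤ)` as a set of real 2×2 matrices. -/
def SL2Zset : Set M2R := {g | g.det = 1 ∧ ∀ i j, ∃ n : ℤ, g i j = (n : ℝ)}

/-- `Γ_∞`: upper triangular elements of `SL₂(ℤ)`. -/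
def GammaInf : Set M2R := {g | g ∈ SL2Zset ∧ g 1 0 = 0}

/-- The embedding `(A,B) ↦ A × B` of pairs of 2×2 matrices into 4×4 matrices. -/
def emb (A B : M2R) : M4R :=
  Matrix.fromBlocks !![A 0 0, 0; 0, B 0 0] !![A 0 1, 0; 0, B 0 1]
                    !![A 1 0, 0; 0, B 1 0] !![A 1 1, 0; 0, B 1 1]

/-- `g• := g × 1` -/
def embUp (A : M2R) : M4R := emb A 1

/-- `g_• := 1 × g` -/
def embLow (B : M2R) : M4R := emb 1 B

/-- `χ_{k,s}(g,Z) = j(g,Z)^{-k} |j(g,Z)|^{-2s}` -/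
def chiF (k : ℤ) (s : ℂ) (g : M4R) (Z : M2C) : ℂ :=
  jfac g Z ^ (-k) * ((‖jfac g Z‖ : ℂ)) ^ (-(2 * s))

/-- `φ(Z) = τ + 2z + τ'` -/
def phiF (Z : M2C) : ℂ := Z 0 0 + 2 * Z 0 1 + Z 1 1

/-- `Φ_{k,s}(Z) = φ(Z)^{-k} |φ(Z)|^{-2s}` -/
def PhiF (k : ℤ) (s : ℂ) (Z : M2C) : ℂ :=
  phiF Z ^ (-k) * ((‖phiF Z‖ : ℂ)) ^ (-(2 * s))

/-- The Petersson slash operator `(F|_k g)(Z) = j(g,Z)^{-k} F(g(Z))`. -/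
def slashOp (k : ℤ) (g : M4R) (F : M2C → ℂ) (Z : M2C) : ℂ := jfac g Z ^ (-k) * F (smul4 g Z)

/-- The Siegel modular group as a type. -/
def Sp2ZT := {g : M4R // g ∈ Sp2Z}

/-- the left coset relation for `Γ_{2,0} \ Γ₂` -/
def rel20 (g g' : Sp2ZT) : Prop := ∃ γ ∈ Gamma20, g'.1 = γ * g.1

/-- `SL₂(ℤ)` as a type. -/
def SL2ZT := {g : M2R // g ∈ SL2Zset}

/-- the left coset relation for `Γ_∞ \ Γ` -/
def relInf (g g' : SL2ZT) : Prop := ∃ γ ∈ GammaInf, g'.1 = γ * g.1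

/-- a choice of representative of an equivalence class -/
def qout {α : Sort*} {r : α → α → Prop} (q : Quot r) : α := Classical.choose (Quot.exists_rep q)

/-- The real analytic Siegel Eisenstein series of degree 2:
`E_k^{(2)}(Z,s) = Σ_{g ∈ Γ_{2,0}\Γ₂} j(g,Z)^{-k} δ(g(Z))^s`. -/
def Eis (k : ℤ) (s : ℂ) (Z : M2C) : ℂ := ∑' q : Quot rel20, eisSummand k s (qout q).1 Z

/-- `B_k(Z,s) = δ(Z)^s Σ_{g ∈ Γ} Φ_{k,s}(g_•(Z)) χ_{k,s}(g_•,Z)` -/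
def Bk (k : ℤ) (s : ℂ) (W : M2C) : ℂ :=
  ((Hdelta W : ℂ)) ^ s * ∑' g : SL2ZT, PhiF k s (smul4 (embLow g.1) W) * chiF k s (embLow g.1) W

/-- `A_k(Z,s) = δ(Z)^s Σ_{g,h ∈ Γ_∞\Γ} χ_{k,s}(g• h_•, Z)` -/
def Ak (k : ℤ) (s : ℂ) (Z : M2C) : ℂ :=
  ((Hdelta Z : ℂ)) ^ s *
    ∑' q : Quot relInf × Quot relInf, chiF k s (embUp (qout q.1).1 * embLow (qout q.2).1) Z

/-- The normalized Hecke operator `T_p` applied via the upper embedding `•`. -/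
def TpUp (k : ℤ) (p : ℕ) (F : M2C → ℂ) (Z : M2C) : ℂ :=
  (p : ℂ) ^ ((k : ℂ) / 2 - 1) *
    (slashOp k (embUp (((p : ℝ) ^ (-(1:ℝ)/2)) • !![(p:ℝ), 0; 0, 1])) F Z +
      ∑ a : Fin p, slashOp k (embUp (((p : ℝ) ^ (-(1:ℝ)/2)) • !![1, ((a:ℕ):ℝ); 0, (p:ℝ)])) F Z)

/-- The normalized Hecke operator `T_p` applied via the lower embedding `_•`. -/
def TpLow (k : ℤ) (p : ℕ) (F : M2C → ℂ) (Z : M2C) : ℂ :=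
  (p : ℂ) ^ ((k : ℂ) / 2 - 1) *
    (slashOp k (embLow (((p : ℝ) ^ (-(1:ℝ)/2)) • !![(p:ℝ), 0; 0, 1])) F Z +
      ∑ a : Fin p, slashOp k (embLow (((p : ℝ) ^ (-(1:ℝ)/2)) • !![1, ((a:ℕ):ℝ); 0, (p:ℝ)])) F Z)

/-- `SL₂(ℤ)` as a set of rational matrices. -/
def SL2Qint : Set M2Q := {g | g.det = 1 ∧ ∀ i j, ∃ n : ℤ, g i j = (n : ℚ)}

/-- the left coset `Γ g` in `GL₂(ℚ)` -/
def leftCosetQ (g : M2Q) : Set M2Q := {x | ∃ γ ∈ SL2Qint, x = γ * g}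

/-- the double coset `Γ g Γ` in `GL₂(ℚ)` -/
def doubleCosetQ (g : M2Q) : Set M2Q := {x | ∃ γ₁ ∈ SL2Qint, ∃ γ₂ ∈ SL2Qint, x = γ₁ * g * γ₂}

/-- `d_m = [[m,0],[0,m⁻¹]]` -/
def dmQ (m : ℕ) : M2Q := !![(m:ℚ), 0; 0, (m:ℚ)⁻¹]

/-- entrywise coercion `ℚ → ℝ` -/
def mapR (g : M2Q) : M2R := g.map (fun x => (x : ℝ))

/-- `γ 0, …, γ (r-1)` is a system of representatives for the left cosets of `Γ`
contained in the double coset `Γ d_m Γ`. -/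
def IsRepSystem (m : ℕ) (r : ℕ) (γ : Fin r → M2Q) : Prop :=
  (∀ j, γ j ∈ doubleCosetQ (dmQ m)) ∧
  (⋃ j, leftCosetQ (γ j)) = doubleCosetQ (dmQ m) ∧
  (∀ j j', j ≠ j' → Disjoint (leftCosetQ (γ j)) (leftCosetQ (γ j')))

/-- the matrices `g_m` -/
def gmMat (m : ℕ) : M4R :=
  Matrix.fromBlocks !![0,0;0,1] !![-1,0;0,0] !![1,(m:ℝ);0,0] !![0,0;-(m:ℝ),1]

/-- `J_m = [[0,1/m],[m,0]]` -/
def JmMat (m : ℕ) : M2R := !![0, 1/(m:ℝ); (m:ℝ), 0]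

/-- `Γ(m) = {g ∈ Γ : J_m g J_m ∈ Γ}` -/
def GammaM (m : ℕ) : Set M2R := {g | g ∈ SL2Zset ∧ JmMat m * g * JmMat m ∈ SL2Zset}

/-- the left coset `Γ_{2,0} x` -/
def C20 (x : M4R) : Set M4R := {y | ∃ γ ∈ Gamma20, y = γ * x}

/-- `g^# = [[d,b],[c,a]]` -/
def sharp (g : M2R) : M2R := !![g 1 1, g 0 1; g 1 0, g 0 0]

/-- half-integral symmetric matrix `[[n, r/2],[r/2, m]]` -/
def halfIntMat (n r m : ℤ) : M2R := !![(n:ℝ), (r:ℝ)/2; (r:ℝ)/2, (m:ℝ)]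

def IsHalfIntegral (M : M2R) : Prop := ∃ n r m : ℤ, M = halfIntMat n r m

/-- `Z = X + iY` -/
def mkZ (X Y : M2R) : M2C := X.map (fun x => (x:ℂ)) + Complex.I • Y.map (fun x => (x:ℂ))

/-- `j([[a,b],[c,d]], τ) = cτ + d` on the upper half plane -/
def jSL (g : M2R) (τ : ℂ) : ℂ := (g 1 0 : ℝ) * τ + ((g 1 1 : ℝ) : ℂ)

/-- the Möbius action of `GL₂⁺(ℝ)` on the upper half plane -/
def moeb (g : M2R) (τ : ℂ) : ℂ := (((g 0 0 : ℝ) : ℂ) * τ + ((g 0 1 : ℝ) : ℂ)) / (((g 1 0 : ℝ) : ℂ) * τ + ((g 1 1 : ℝ) : ℂ))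

/-- the degree 1 real analytic Eisenstein series `E_k(τ,s) = Σ_{g ∈ Γ_∞\Γ} j(g,τ)^{-k} Im(g(τ))^s` -/
def E1 (k : ℤ) (s : ℂ) (τ : ℂ) : ℂ :=
  ∑' q : Quot relInf, jSL (qout q).1 τ ^ (-k) * ((((moeb (qout q).1 τ).im : ℝ) : ℂ)) ^ s



/-! ### Auxiliary lemmas for `Phi_chi_symmetry` -/

lemma posDef_diag_pos {M : M2R} (h : M.PosDef) (i : Fin 2) : 0 < M i i := by
  exact h.diag_pos

lemma lin_ne_zero (r₁ r₂ : ℝ) (w : ℂ) (hw : 0 < w.im) (h : r₁ ≠ 0 ∨ r₂ ≠ 0) :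
    (r₁ : ℂ) * w + (r₂ : ℂ) ≠ 0 := by
  intro hc
  rcases eq_or_ne r₁ 0 with h1 | h1
  · subst h1
    simp only [ofReal_zero, zero_mul, zero_add, ofReal_eq_zero] at hc
    rcases h with h | h
    · exact h rfl
    · exact h hc
  · have him := congrArg Complex.im hc
    simp only [add_im, mul_im, ofReal_re, ofReal_im, zero_mul, add_zero, zero_im] at him
    have : r₁ * w.im ≠ 0 := mul_ne_zero h1 (ne_of_gt hw)
    exact this him

lemma smul4_embUp (g : M2R) (Z : M2C) :
    smul4 (embUp g) Z
      = (!![(g 0 0 : ℂ),0;0,1] * Z + !![(g 0 1 : ℂ),0;0,0]) *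
          (!![(g 1 0 : ℂ),0;0,0] * Z + !![(g 1 1 : ℂ),0;0,1])⁻¹ := by
  have h11 : (mapC (embUp g)).toBlocks₁₁ = !![(g 0 0 : ℂ),0;0,1] := by
    ext i j; fin_cases i <;> fin_cases j <;> simp [mapC, embUp, emb, Matrix.toBlocks₁₁]
  have h12 : (mapC (embUp g)).toBlocks₁₂ = !![(g 0 1 : ℂ),0;0,0] := by
    ext i j; fin_cases i <;> fin_cases j <;> simp [mapC, embUp, emb, Matrix.toBlocks₁₂]
  have h21 : (mapC (embUp g)).toBlocks₂₁ = !![(g 1 0 : ℂ),0;0,0] := by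
    ext i j; fin_cases i <;> fin_cases j <;> simp [mapC, embUp, emb, Matrix.toBlocks₂₁]
  have h22 : (mapC (embUp g)).toBlocks₂₂ = !![(g 1 1 : ℂ),0;0,1] := by
    ext i j; fin_cases i <;> fin_cases j <;> simp [mapC, embUp, emb, Matrix.toBlocks₂₂]
  rw [smul4, h11, h12, h21, h22]

lemma smul4_embLow (g : M2R) (Z : M2C) :
    smul4 (embLow g) Z
      = (!![1,0;0,(g 0 0 : ℂ)] * Z + !![0,0;0,(g 0 1 : ℂ)]) *
          (!![0,0;0,(g 1 0 : ℂ)] * Z + !![1,0;0,(g 1 1 : ℂ)])⁻¹ := by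
  have h11 : (mapC (embLow g)).toBlocks₁₁ = !![1,0;0,(g 0 0 : ℂ)] := by
    ext i j; fin_cases i <;> fin_cases j <;> simp [mapC, embLow, emb, Matrix.toBlocks₁₁]
  have h12 : (mapC (embLow g)).toBlocks₁₂ = !![0,0;0,(g 0 1 : ℂ)] := by
    ext i j; fin_cases i <;> fin_cases j <;> simp [mapC, embLow, emb, Matrix.toBlocks₁₂]
  have h21 : (mapC (embLow g)).toBlocks₂₁ = !![0,0;0,(g 1 0 : ℂ)] := by
    ext i j; fin_cases i <;> fin_cases j <;> simp [mapC, embLow, emb, Matrix.toBlocks₂₁]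
  have h22 : (mapC (embLow g)).toBlocks₂₂ = !![1,0;0,(g 1 1 : ℂ)] := by
    ext i j; fin_cases i <;> fin_cases j <;> simp [mapC, embLow, emb, Matrix.toBlocks₂₂]
  rw [smul4, h11, h12, h21, h22]

lemma jfac_embUp (g : M2R) (Z : M2C) :
    jfac (embUp g) Z = (g 1 0 : ℂ) * Z 0 0 + (g 1 1 : ℂ) := by
  have h21 : (mapC (embUp g)).toBlocks₂₁ = !![(g 1 0 : ℂ),0;0,0] := by
    ext i j; fin_cases i <;> fin_cases j <;> simp [mapC, embUp, emb, Matrix.toBlocks₂₁]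
  have h22 : (mapC (embUp g)).toBlocks₂₂ = !![(g 1 1 : ℂ),0;0,1] := by
    ext i j; fin_cases i <;> fin_cases j <;> simp [mapC, embUp, emb, Matrix.toBlocks₂₂]
  rw [jfac, h21, h22]
  simp [Matrix.det_fin_two, Matrix.mul_apply, Matrix.add_apply, Fin.sum_univ_two,
    Matrix.vecHead, Matrix.vecTail, Matrix.vecMul, dotProduct]

lemma jfac_embLow (g : M2R) (Z : M2C) :
    jfac (embLow g) Z = (g 1 0 : ℂ) * Z 1 1 + (g 1 1 : ℂ) := by
  have h21 : (mapC (embLow g)).toBlocks₂₁ = !![0,0;0,(g 1 0 : ℂ)] := by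
    ext i j; fin_cases i <;> fin_cases j <;> simp [mapC, embLow, emb, Matrix.toBlocks₂₁]
  have h22 : (mapC (embLow g)).toBlocks₂₂ = !![1,0;0,(g 1 1 : ℂ)] := by
    ext i j; fin_cases i <;> fin_cases j <;> simp [mapC, embLow, emb, Matrix.toBlocks₂₂]
  rw [jfac, h21, h22]
  simp [Matrix.det_fin_two, Matrix.mul_apply, Matrix.add_apply, Fin.sum_univ_two,
    Matrix.vecHead, Matrix.vecTail, Matrix.vecMul, dotProduct]

lemma phi_up (a b c d : ℂ) (Z : M2C) (h1 : c * Z 0 0 + d ≠ 0) :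
    phiF ((!![a,0;0,1] * Z + !![b,0;0,0]) * (!![c,0;0,0] * Z + !![d,0;0,1])⁻¹) * (c * Z 0 0 + d)
      = a * Z 0 0 + b + 2 * Z 0 1 * (a * d - b * c)
        + Z 1 1 * (c * Z 0 0 + d) - c * Z 0 1 * Z 1 0 := by
  have hdet : (!![c,0;0,0] * Z + !![d,0;0,1]).det = c * Z 0 0 + d := by
    simp [Matrix.det_fin_two, Matrix.mul_apply, Matrix.add_apply, Fin.sum_univ_two,
      Matrix.vecHead, Matrix.vecTail, Matrix.vecMul, dotProduct]
  rw [Matrix.inv_def, Ring.inverse_eq_inv, hdet, Matrix.adjugate_fin_two]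
  simp only [phiF, Matrix.mul_apply, Matrix.add_apply, Matrix.smul_apply, Fin.sum_univ_two,
    Matrix.of_apply, Matrix.cons_val', Matrix.cons_val_zero, Matrix.cons_val_one,
    Matrix.head_cons, Matrix.head_fin_const, Matrix.cons_val_fin_one, Matrix.empty_val',
    smul_eq_mul]
  have h1' : Z 0 0 * c + d ≠ 0 := by rwa [mul_comm] at h1
  field_simp
  ring

lemma phi_low (p q r t : ℂ) (Z : M2C) (h2 : r * Z 1 1 + t ≠ 0) :
    phiF ((!![1,0;0,p] * Z + !![0,0;0,q]) * (!![0,0;0,r] * Z + !![1,0;0,t])⁻¹) * (r * Z 1 1 + t)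
      = Z 0 0 * (r * Z 1 1 + t) - r * Z 0 1 * Z 1 0 + 2 * Z 0 1 + p * Z 1 1 + q := by
  have hdet : (!![0,0;0,r] * Z + !![1,0;0,t]).det = r * Z 1 1 + t := by
    simp [Matrix.det_fin_two, Matrix.mul_apply, Matrix.add_apply, Fin.sum_univ_two,
      Matrix.vecHead, Matrix.vecTail, Matrix.vecMul, dotProduct]
  rw [Matrix.inv_def, Ring.inverse_eq_inv, hdet, Matrix.adjugate_fin_two]
  simp only [phiF, Matrix.mul_apply, Matrix.add_apply, Matrix.smul_apply, Fin.sum_univ_two,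
    Matrix.of_apply, Matrix.cons_val', Matrix.cons_val_zero, Matrix.cons_val_one,
    Matrix.head_cons, Matrix.head_fin_const, Matrix.cons_val_fin_one, Matrix.empty_val',
    smul_eq_mul]
  field_simp
  ring

lemma assemble (k : ℤ) (s : ℂ) (φ j : ℂ) :
    φ ^ (-k) * ((‖φ‖ : ℂ)) ^ (-(2 * s)) * (j ^ (-k) * ((‖j‖ : ℂ)) ^ (-(2 * s)))
      = (φ * j) ^ (-k) * ((‖φ * j‖ : ℂ)) ^ (-(2 * s)) := by
  rw [norm_mul, mul_zpow, Complex.ofReal_mul, mul_cpow_ofReal_nonneg (norm_nonneg _) (norm_nonneg _)]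
  ring

/-- the symmetry relation
`Φ_{k,s}(g•(Z)) χ_{k,s}(g•,Z) = Φ_{k,s}((g^#)_•(Z)) χ_{k,s}((g^#)_•,Z)`. -/
theorem Phi_chi_symmetry (k : ℤ) (hk : Even k) (s : ℂ) (g : M2R) (hg : g.det = 1)
    (Z : M2C) (hZ : Z ∈ SiegelH2) :
    PhiF k s (smul4 (embUp g) Z) * chiF k s (embUp g) Z
      = PhiF k s (smul4 (embLow (sharp g)) Z) * chiF k s (embLow (sharp g)) Z := by
  have hsym : Z 1 0 = Z 0 1 := hZ.1.apply 0 1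
  have him0 : 0 < (Z 0 0).im := by
    have := posDef_diag_pos hZ.2 0
    simpa [ImM] using this
  have him1 : 0 < (Z 1 1).im := by
    have := posDef_diag_pos hZ.2 1
    simpa [ImM] using this
  have hdetR : g 0 0 * g 1 1 - g 0 1 * g 1 0 = 1 := by
    rw [← Matrix.det_fin_two]; exact hg
  have hj1 : (g 1 0 : ℂ) * Z 0 0 + (g 1 1 : ℂ) ≠ 0 := by
    apply lin_ne_zero _ _ _ him0
    by_contra hcon
    push_neg at hcon
    rw [hcon.1, hcon.2] at hdetR
    simp at hdetR
  have hj2 : (g 1 0 : ℂ) * Z 1 1 + (g 0 0 : ℂ) ≠ 0 := by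
    apply lin_ne_zero _ _ _ him1
    by_contra hcon
    push_neg at hcon
    rw [hcon.1, hcon.2] at hdetR
    simp at hdetR
  have hdetC : (g 0 0 : ℂ) * (g 1 1 : ℂ) - (g 0 1 : ℂ) * (g 1 0 : ℂ) = 1 := by
    have := congrArg (fun x : ℝ => (x : ℂ)) hdetR
    push_cast at this
    simpa using this
  -- the two factors of automorphy
  have hJ1 : jfac (embUp g) Z = (g 1 0 : ℂ) * Z 0 0 + (g 1 1 : ℂ) := jfac_embUp g Z
  have hJ2 : jfac (embLow (sharp g)) Z = (g 1 0 : ℂ) * Z 1 1 + (g 0 0 : ℂ) := by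
    rw [jfac_embLow]
    simp [sharp]
  -- the key identity φ₁ j₁ = φ₂ j₂
  have hP1 : phiF (smul4 (embUp g) Z) * jfac (embUp g) Z
      = (g 0 0 : ℂ) * Z 0 0 + (g 0 1 : ℂ) + 2 * Z 0 1
        + Z 1 1 * ((g 1 0 : ℂ) * Z 0 0 + (g 1 1 : ℂ)) - (g 1 0 : ℂ) * Z 0 1 * Z 0 1 := by
    rw [hJ1, smul4_embUp, phi_up _ _ _ _ _ hj1, hdetC, hsym]
    ring
  have hP2 : phiF (smul4 (embLow (sharp g)) Z) * jfac (embLow (sharp g)) Z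
      = Z 0 0 * ((g 1 0 : ℂ) * Z 1 1 + (g 0 0 : ℂ)) - (g 1 0 : ℂ) * Z 0 1 * Z 0 1
        + 2 * Z 0 1 + (g 1 1 : ℂ) * Z 1 1 + (g 0 1 : ℂ) := by
    have e00 : sharp g 0 0 = g 1 1 := by simp [sharp]
    have e01 : sharp g 0 1 = g 0 1 := by simp [sharp]
    have e10 : sharp g 1 0 = g 1 0 := by simp [sharp]
    have e11 : sharp g 1 1 = g 0 0 := by simp [sharp]
    rw [hJ2, smul4_embLow, e00, e01, e10, e11,
      phi_low _ _ _ _ _ hj2, hsym]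
  have hPP : phiF (smul4 (embUp g) Z) * jfac (embUp g) Z
      = phiF (smul4 (embLow (sharp g)) Z) * jfac (embLow (sharp g)) Z := by
    rw [hP1, hP2]; ring
  calc PhiF k s (smul4 (embUp g) Z) * chiF k s (embUp g) Z
      = (phiF (smul4 (embUp g) Z) * jfac (embUp g) Z) ^ (-k)
          * ((‖phiF (smul4 (embUp g) Z) * jfac (embUp g) Z‖ : ℂ)) ^ (-(2 * s)) := by
        rw [PhiF, chiF, assemble]
    _ = (phiF (smul4 (embLow (sharp g)) Z) * jfac (embLow (sharp g)) Z) ^ (-k)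
          * ((‖phiF (smul4 (embLow (sharp g)) Z) * jfac (embLow (sharp g)) Z‖ : ℂ))
            ^ (-(2 * s)) := by rw [hPP]
    _ = PhiF k s (smul4 (embLow (sharp g)) Z) * chiF k s (embLow (sharp g)) Z := by
        rw [PhiF, chiF, assemble]


end
end

section
/- Let k be an even integer and s ∈ ℂ with 2·Re(s) + k > 3. Then: (i) for every Z ∈ ℍ₂, Im φ(Z) = Im(τ + 2z + τ') > 0, so Φ_{k,s}(Z) is defined; (ii) the double series δ(Z)^s Σ_{g,h ∈ Γ_∞\Γ} χ_{k,s}(g• h_•, Z) defining A_k(Z,s) converges absolutely; and (iii) the series δ(Z)^s Σ_{g ∈ Γ} Φ_{k,s}(g_•(Z)) χ_{k,s}(g_•, Z) defining B_k(Z,s) converges absolutely. -/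
open Matrix Complex Filter Topology

noncomputable section

/-! ### Auxiliary lemmas for the convergence proof -/

section AkBkAux

open EisensteinSeries in
lemma akbk_norm_int_vec_pos {x : Fin 2 → ℤ} (hx : x ≠ 0) : (0:ℝ) < ‖x‖ :=
  lt_of_le_of_ne (norm_nonneg x) (Ne.symm (norm_ne_zero_iff.mpr hx))

lemma akbk_emb_mul (A B A' B' : M2R) : emb A B * emb A' B' = emb (A * A') (B * B') := by
  ext i j
  rcases i with i | i <;> rcases j with j | j <;> fin_cases i <;> fin_cases j <;>
    simp [emb, Matrix.mul_apply, Fintype.sum_sum_type, Fin.sum_univ_two, Matrix.fromBlocks]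

lemma akbk_embUp_mul_embLow (A B : M2R) : embUp A * embLow B = emb A B := by
  rw [embUp, embLow, akbk_emb_mul, mul_one, one_mul]

lemma akbk_blocks11 (A B : M2R) :
    (mapC (emb A B)).toBlocks₁₁ = !![((A 0 0 : ℝ) : ℂ), 0; 0, ((B 0 0 : ℝ) : ℂ)] := by
  ext i j; fin_cases i <;> fin_cases j <;> simp [mapC, emb, Matrix.toBlocks₁₁, Matrix.fromBlocks]

lemma akbk_blocks12 (A B : M2R) :
    (mapC (emb A B)).toBlocks₁₂ = !![((A 0 1 : ℝ) : ℂ), 0; 0, ((B 0 1 : ℝ) : ℂ)] := by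
  ext i j; fin_cases i <;> fin_cases j <;> simp [mapC, emb, Matrix.toBlocks₁₂, Matrix.fromBlocks]

lemma akbk_blocks21 (A B : M2R) :
    (mapC (emb A B)).toBlocks₂₁ = !![((A 1 0 : ℝ) : ℂ), 0; 0, ((B 1 0 : ℝ) : ℂ)] := by
  ext i j; fin_cases i <;> fin_cases j <;> simp [mapC, emb, Matrix.toBlocks₂₁, Matrix.fromBlocks]

lemma akbk_blocks22 (A B : M2R) :
    (mapC (emb A B)).toBlocks₂₂ = !![((A 1 1 : ℝ) : ℂ), 0; 0, ((B 1 1 : ℝ) : ℂ)] := by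
  ext i j; fin_cases i <;> fin_cases j <;> simp [mapC, emb, Matrix.toBlocks₂₂, Matrix.fromBlocks]

lemma akbk_jfac_emb (A B : M2R) (Z : M2C) :
    jfac (emb A B) Z = (((A 1 0 : ℝ) : ℂ) * Z 0 0 + ((A 1 1 : ℝ) : ℂ))
        * (((B 1 0 : ℝ) : ℂ) * Z 1 1 + ((B 1 1 : ℝ) : ℂ))
      - ((A 1 0 : ℝ) : ℂ) * ((B 1 0 : ℝ) : ℂ) * (Z 0 1 * Z 1 0) := by
  rw [jfac, akbk_blocks21, akbk_blocks22, Matrix.det_fin_two]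
  simp [Matrix.mul_apply, Fin.sum_univ_two, Matrix.vecMul, dotProduct]
  ring

lemma akbk_jfac_embLow (B : M2R) (Z : M2C) :
    jfac (embLow B) Z = ((B 1 0 : ℝ) : ℂ) * Z 1 1 + ((B 1 1 : ℝ) : ℂ) := by
  rw [embLow, akbk_jfac_emb]
  simp [Matrix.one_apply]

lemma akbk_phi_smul_embLow (g : M2R) (Z : M2C)
    (hj : ((g 1 0 : ℝ) : ℂ) * Z 1 1 + ((g 1 1 : ℝ) : ℂ) ≠ 0) :
    phiF (smul4 (embLow g) Z) =
      Z 0 0 + (2 * Z 0 1 + ((g 0 0 : ℝ) : ℂ) * Z 1 1 + ((g 0 1 : ℝ) : ℂ)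
        - ((g 1 0 : ℝ) : ℂ) * (Z 0 1 * Z 1 0)) / (((g 1 0 : ℝ) : ℂ) * Z 1 1 + ((g 1 1 : ℝ) : ℂ)) := by
  set j : ℂ := ((g 1 0 : ℝ) : ℂ) * Z 1 1 + ((g 1 1 : ℝ) : ℂ) with hjdef
  have h1 : ((mapC (embLow g)).toBlocks₂₁ * Z + (mapC (embLow g)).toBlocks₂₂)
      = !![1, 0; ((g 1 0 : ℝ) : ℂ) * Z 1 0, j] := by
    rw [embLow, akbk_blocks21, akbk_blocks22]
    ext i j'
    fin_cases i <;> fin_cases j' <;>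
      simp [Matrix.mul_apply, Fin.sum_univ_two, Matrix.one_apply, Matrix.vecMul,
        dotProduct, hjdef]
  have h2 : (!![1, 0; ((g 1 0 : ℝ) : ℂ) * Z 1 0, j])⁻¹
      = !![1, 0; -((g 1 0 : ℝ) : ℂ) * Z 1 0 / j, 1 / j] := by
    apply inv_eq_right_inv
    ext i j'
    fin_cases i <;> fin_cases j' <;>
      simp [Matrix.mul_apply, Fin.sum_univ_two, Matrix.vecMul, dotProduct] <;>
      field_simp <;> ring
  rw [phiF, smul4, h1, h2, embLow, akbk_blocks11, akbk_blocks12]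
  simp [Matrix.mul_apply, Fin.sum_univ_two, Matrix.one_apply, Matrix.vecMul, dotProduct,
    Matrix.vecHead, Matrix.vecTail]
  field_simp
  ring

lemma akbk_key_real_phi (y v zr x' y' a b c d : ℝ) (hdet : a*d - b*c = 1) (hy' : 0 < y')
    (hD : 0 < (c*x'+d)^2 + (c*y')^2) :
    (y*y' - v^2)/y' ≤ y + ((2*v + a*y' - 2*c*zr*v)*(c*x'+d)
      - (2*zr + a*x' + b - c*(zr^2 - v^2))*(c*y'))/((c*x'+d)^2 + (c*y')^2) := by
  set m := c*x'+d with hm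
  set n := c*y' with hn
  set D := m^2 + n^2 with hDdef
  set E := (2*v + a*y' - 2*c*zr*v)*m - (2*zr + a*x' + b - c*(zr^2 - v^2))*n with hE
  set S := v*m - zr*n + y' with hS
  have hqD : E/D * D = E := div_mul_cancel₀ _ hD.ne'
  have hBy' : (y*y'-v^2)/y' * y' = y*y'-v^2 := div_mul_cancel₀ _ hy'.ne'
  have hpoly : (y + E/D - (y*y'-v^2)/y') * (y'*D) = S^2 := by
    have h1 : (y + E/D - (y*y'-v^2)/y') * (y'*D)
        = y*y'*D + (E/D*D)*y' - ((y*y'-v^2)/y'*y')*D := by ring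
    rw [h1, hqD, hBy', hE, hS, hDdef, hm, hn]
    linear_combination (y'^2) * hdet
  have h0 : 0 < y'*D := mul_pos hy' hD
  have h6 : 0 ≤ (y + E/D - (y*y'-v^2)/y') * (y'*D) := by rw [hpoly]; positivity
  have h5 : 0 ≤ y + E/D - (y*y'-v^2)/y' :=
    nonneg_of_mul_nonneg_right
      (by nlinarith [h6] : 0 ≤ (y'*D) * (y + E/D - (y*y'-v^2)/y')) h0
  linarith

lemma akbk_key_real_w (y v zr x' y' c d : ℝ) (hy' : 0 < y')
    (hD : 0 < (c*x'+d)^2 + (c*y')^2) :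
    (y*y' - v^2)/y' ≤ y + ((-(2*c*zr*v))*(c*x'+d)
      - (-(c*(zr^2 - v^2)))*(c*y'))/((c*x'+d)^2 + (c*y')^2) := by
  set m := c*x'+d with hm
  set n := c*y' with hn
  set D := m^2 + n^2 with hDdef
  set E := (-(2*c*zr*v))*m - (-(c*(zr^2 - v^2)))*n with hE
  set S := v*m - zr*n with hS
  have hqD : E/D * D = E := div_mul_cancel₀ _ hD.ne'
  have hBy' : (y*y'-v^2)/y' * y' = y*y'-v^2 := div_mul_cancel₀ _ hy'.ne'
  have hpoly : (y + E/D - (y*y'-v^2)/y') * (y'*D) = S^2 := by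
    have h1 : (y + E/D - (y*y'-v^2)/y') * (y'*D)
        = y*y'*D + (E/D*D)*y' - ((y*y'-v^2)/y'*y')*D := by ring
    rw [h1, hqD, hBy', hE, hS, hDdef, hm, hn]
    ring
  have h0 : 0 < y'*D := mul_pos hy' hD
  have h6 : 0 ≤ (y + E/D - (y*y'-v^2)/y') * (y'*D) := by rw [hpoly]; positivity
  have h5 : 0 ≤ y + E/D - (y*y'-v^2)/y' :=
    nonneg_of_mul_nonneg_right
      (by nlinarith [h6] : 0 ≤ (y'*D) * (y + E/D - (y*y'-v^2)/y')) h0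
  linarith

lemma akbk_normSq_lin (t : ℂ) (c d : ℝ) :
    Complex.normSq ((c:ℂ)*t + d) = (c*t.re+d)^2 + (c*t.im)^2 := by
  rw [Complex.normSq_apply]
  simp only [Complex.add_re, Complex.add_im, Complex.mul_re, Complex.mul_im,
    Complex.ofReal_re, Complex.ofReal_im]
  ring

lemma akbk_im_phi_ge (t z t' : ℂ) (a b c d : ℝ) (hdet : a*d - b*c = 1) (hy' : 0 < t'.im)
    (hj : ((c:ℂ)*t' + d) ≠ 0) :
    (t.im*t'.im - z.im^2)/t'.im
      ≤ (t + (2*z + (a:ℂ)*t' + (b:ℂ) - (c:ℂ)*(z*z))/((c:ℂ)*t' + d)).im := by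
  have hD : 0 < (c*t'.re+d)^2 + (c*t'.im)^2 := by
    rw [← akbk_normSq_lin]; exact Complex.normSq_pos.mpr hj
  have him : (t + (2*z + (a:ℂ)*t' + (b:ℂ) - (c:ℂ)*(z*z))/((c:ℂ)*t' + d)).im
      = t.im + ((2*z.im + a*t'.im - 2*c*z.re*z.im)*(c*t'.re+d)
        - (2*z.re + a*t'.re + b - c*(z.re^2 - z.im^2))*(c*t'.im))/((c*t'.re+d)^2 + (c*t'.im)^2) := by
    rw [Complex.add_im, Complex.div_im, Complex.normSq_apply]
    simp only [Complex.add_re, Complex.add_im, Complex.sub_re, Complex.sub_im,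
      Complex.mul_re, Complex.mul_im, Complex.ofReal_re, Complex.ofReal_im,
      Complex.re_ofNat, Complex.im_ofNat]
    ring
  rw [him]
  exact akbk_key_real_phi t.im z.im z.re t'.re t'.im a b c d hdet hy' hD

lemma akbk_im_w_ge (t z t' : ℂ) (c d : ℝ) (hy' : 0 < t'.im) (hj : ((c:ℂ)*t' + d) ≠ 0) :
    (t.im*t'.im - z.im^2)/t'.im ≤ (t - (c:ℂ)*(z*z)/((c:ℂ)*t' + d)).im := by
  have hD : 0 < (c*t'.re+d)^2 + (c*t'.im)^2 := by
    rw [← akbk_normSq_lin]; exact Complex.normSq_pos.mpr hj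
  have him : (t - (c:ℂ)*(z*z)/((c:ℂ)*t' + d)).im
      = t.im + ((-(2*c*z.re*z.im))*(c*t'.re+d)
        - (-(c*(z.re^2 - z.im^2)))*(c*t'.im))/((c*t'.re+d)^2 + (c*t'.im)^2) := by
    rw [Complex.sub_im, Complex.div_im, Complex.normSq_apply]
    simp only [Complex.add_re, Complex.add_im, Complex.sub_re, Complex.sub_im,
      Complex.mul_re, Complex.mul_im, Complex.ofReal_re, Complex.ofReal_im]
    ring
  rw [him]
  exact akbk_key_real_w t.im z.im z.re t'.re t'.im c d hy' hD

lemma akbk_norm_chi_shape (k : ℤ) (s : ℂ) (J : ℂ) (hJ : J ≠ 0) :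
    ‖J ^ (-k) * ((‖J‖ : ℂ)) ^ (-(2*s))‖
      = ‖J‖ ^ (-((k:ℝ) + 2*s.re)) := by
  have hJ0 : 0 < ‖J‖ := norm_pos_iff.mpr hJ
  rw [norm_mul, norm_zpow,
    Complex.norm_cpow_eq_rpow_re_of_pos hJ0, ← Real.rpow_intCast (‖J‖) (-k),
    ← Real.rpow_add hJ0]
  norm_num
  ring_nf

lemma akbk_norm_real_cpow (x : ℝ) (hx : 0 < x) (s : ℂ) : ‖((x:ℝ):ℂ) ^ s‖ = x ^ s.re := by
  rw [Complex.norm_cpow_eq_rpow_re_of_pos hx]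

lemma akbk_rpow_neg_mono {a b : ℝ} (ha : 0 < a) (hab : a ≤ b) {e : ℝ} (he : 0 ≤ e) :
    b ^ (-e) ≤ a ^ (-e) := by
  rw [Real.rpow_neg (by linarith), Real.rpow_neg ha.le]
  exact inv_anti₀ (Real.rpow_pos_of_pos ha _) (Real.rpow_le_rpow ha.le hab he)

lemma akbk_int_entries_mul {g h : M2R} (hg : ∀ i j, ∃ n : ℤ, g i j = (n : ℝ))
    (hh : ∀ i j, ∃ n : ℤ, h i j = (n : ℝ)) : ∀ i j, ∃ n : ℤ, (g * h) i j = (n : ℝ) := by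
  intro i j
  obtain ⟨a, ha⟩ := hg i 0
  obtain ⟨b, hb⟩ := hg i 1
  obtain ⟨c, hc⟩ := hh 0 j
  obtain ⟨d, hd⟩ := hh 1 j
  refine ⟨a*c + b*d, ?_⟩
  rw [Matrix.mul_apply, Fin.sum_univ_two, ha, hb, hc, hd]
  push_cast; ring

lemma akbk_one_mem_SL2Z : (1 : M2R) ∈ SL2Zset := by
  refine ⟨Matrix.det_one, fun i j => ?_⟩
  by_cases h : i = j
  · exact ⟨1, by simp [h, Matrix.one_apply]⟩
  · exact ⟨0, by simp [Matrix.one_apply, h]⟩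

lemma akbk_SL2Z_mul {g h : M2R} (hg : g ∈ SL2Zset) (hh : h ∈ SL2Zset) : g * h ∈ SL2Zset :=
  ⟨by rw [Matrix.det_mul, hg.1, hh.1, one_mul], akbk_int_entries_mul hg.2 hh.2⟩

/-- explicit inverse (adjugate) of a `2×2` matrix -/
def akbk_adj2 (g : M2R) : M2R := !![g 1 1, -(g 0 1); -(g 1 0), g 0 0]

lemma akbk_adj2_mul {g : M2R} (hdet : g.det = 1) : akbk_adj2 g * g = 1 := by
  have h := g.det_fin_two
  rw [hdet] at h
  ext i j
  fin_cases i <;> fin_cases j <;>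
    simp [akbk_adj2, Matrix.mul_apply, Fin.sum_univ_two, Matrix.one_apply] <;> linarith

lemma akbk_adj2_mem {g : M2R} (hg : g ∈ SL2Zset) : akbk_adj2 g ∈ SL2Zset := by
  constructor
  · have h := g.det_fin_two
    rw [hg.1] at h
    rw [Matrix.det_fin_two]
    simp [akbk_adj2]; linarith
  · intro i j
    obtain ⟨a, ha⟩ := hg.2 0 0
    obtain ⟨b, hb⟩ := hg.2 0 1
    obtain ⟨c, hc⟩ := hg.2 1 0
    obtain ⟨d, hd⟩ := hg.2 1 1
    fin_cases i <;> fin_cases j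
    · exact ⟨d, by simp [akbk_adj2, hd]⟩
    · exact ⟨-b, by simp [akbk_adj2, hb]⟩
    · exact ⟨-c, by simp [akbk_adj2, hc]⟩
    · exact ⟨a, by simp [akbk_adj2, ha]⟩

lemma akbk_relInf_equivalence : Equivalence relInf := by
  constructor
  · exact fun g => ⟨1, ⟨akbk_one_mem_SL2Z, by simp [Matrix.one_apply]⟩, by rw [one_mul]⟩
  · rintro g g' ⟨γ, ⟨hγ, hγ10⟩, hgg⟩
    refine ⟨akbk_adj2 γ, ⟨akbk_adj2_mem hγ, by simp [akbk_adj2, hγ10]⟩, ?_⟩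
    rw [hgg, ← Matrix.mul_assoc, akbk_adj2_mul hγ.1, one_mul]
  · rintro g g' g'' ⟨γ, ⟨hγ, hγ10⟩, hgg⟩ ⟨γ', ⟨hγ', hγ'10⟩, hgg'⟩
    refine ⟨γ' * γ, ⟨akbk_SL2Z_mul hγ' hγ, ?_⟩, by rw [hgg', hgg, Matrix.mul_assoc]⟩
    rw [Matrix.mul_apply, Fin.sum_univ_two, hγ10, hγ'10]
    ring

/-- If two elements of `SL₂(ℤ)` have the same bottom row then they differ by an upper
unitriangular integer matrix. -/
lemma akbk_row_shift {g g' : SL2ZT} (h0 : g.1 1 0 = g'.1 1 0) (h1 : g.1 1 1 = g'.1 1 1) :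
    ∃ t : ℤ, g'.1 = !![1, (t:ℝ); 0, 1] * g.1 := by
  set γ : M2R := g'.1 * akbk_adj2 g.1 with hγdef
  have hadj : g.1 * akbk_adj2 g.1 = 1 := by
    have h := g.1.det_fin_two; rw [g.2.1] at h
    ext i j
    fin_cases i <;> fin_cases j <;>
      simp [akbk_adj2, Matrix.mul_apply, Fin.sum_univ_two, Matrix.one_apply] <;> linarith
  have hγg : γ * g.1 = g'.1 := by
    rw [hγdef, Matrix.mul_assoc, akbk_adj2_mul g.2.1, mul_one]
  have hdg := g.1.det_fin_two; rw [g.2.1] at hdg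
  have hdg' := g'.1.det_fin_two; rw [g'.2.1] at hdg'
  have hγ10 : γ 1 0 = 0 := by
    rw [hγdef, Matrix.mul_apply, Fin.sum_univ_two]
    simp [akbk_adj2]
    rw [← h0, ← h1]; ring
  have hγ11 : γ 1 1 = 1 := by
    rw [hγdef, Matrix.mul_apply, Fin.sum_univ_two]
    simp [akbk_adj2]
    rw [← h0, ← h1]; linarith
  have hγdet : γ.det = 1 := by
    rw [hγdef, Matrix.det_mul, g'.2.1, one_mul, Matrix.det_fin_two]
    simp [akbk_adj2]; linarith
  have hγ00 : γ 0 0 = 1 := by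
    have := γ.det_fin_two
    rw [hγdet, hγ10, hγ11] at this
    linarith [this]
  obtain ⟨t, ht⟩ := (akbk_int_entries_mul g'.2.2 (akbk_adj2_mem g.2).2) 0 1
  refine ⟨t, ?_⟩
  have hγeq : γ = !![1, (t:ℝ); 0, 1] := by
    ext i j
    fin_cases i <;> fin_cases j
    · simpa using hγ00
    · simpa using ht
    · simpa using hγ10
    · simpa using hγ11
  rw [← hγg, hγeq]

lemma akbk_T_mem_GammaInf (t : ℤ) : !![1, (t:ℝ); 0, 1] ∈ GammaInf := by
  refine ⟨⟨?_, ?_⟩, by simp⟩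
  · rw [Matrix.det_fin_two]; simp
  · intro i j
    fin_cases i <;> fin_cases j
    · exact ⟨1, by simp⟩
    · exact ⟨t, by simp⟩
    · exact ⟨0, by simp⟩
    · exact ⟨1, by simp⟩

/-- the integer bottom row of an element of `SL₂(ℤ)` -/
noncomputable def akbk_rowInt (g : SL2ZT) : Fin 2 → ℤ := fun i => Classical.choose (g.2.2 1 i)

lemma akbk_rowInt_spec (g : SL2ZT) (i : Fin 2) : g.1 1 i = ((akbk_rowInt g i : ℤ) : ℝ) :=
  Classical.choose_spec (g.2.2 1 i)

lemma akbk_rowInt_ne_zero (g : SL2ZT) : akbk_rowInt g ≠ 0 := by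
  intro h
  have h0 : g.1 1 0 = 0 := by rw [akbk_rowInt_spec g 0, h]; simp
  have h1 : g.1 1 1 = 0 := by rw [akbk_rowInt_spec g 1, h]; simp
  have hd := g.1.det_fin_two
  rw [g.2.1, h0, h1] at hd
  simp at hd

lemma akbk_qout_spec {α : Sort*} {r : α → α → Prop} (q : Quot r) : Quot.mk r (qout q) = q :=
  Classical.choose_spec (Quot.exists_rep q)

lemma akbk_gammaInf_d {γ : M2R} (hγ : γ ∈ GammaInf) : γ 1 1 = 1 ∨ γ 1 1 = -1 := by
  obtain ⟨m, hm⟩ := hγ.1.2 0 0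
  obtain ⟨n, hn⟩ := hγ.1.2 1 1
  have hd := γ.det_fin_two
  rw [hγ.1.1, hγ.2, hm, hn] at hd
  have : (m * n : ℤ) = 1 := by
    have : ((m*n : ℤ) : ℝ) = ((1:ℤ):ℝ) := by push_cast; linarith
    exact_mod_cast this
  have hunit : n = 1 ∨ n = -1 := Int.isUnit_iff.mp (isUnit_of_mul_isUnit_right (this ▸ isUnit_one))
  rcases hunit with h | h
  · left; rw [hn, h]; norm_num
  · right; rw [hn, h]; norm_num

lemma akbk_mul_row (γ g : M2R) (hγ : γ 1 0 = 0) (i : Fin 2) :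
    (γ * g) 1 i = γ 1 1 * g 1 i := by
  rw [Matrix.mul_apply, Fin.sum_univ_two, hγ]
  ring

lemma akbk_chiF_inv (k : ℤ) (hk : Even k) (s : ℂ) (Z : M2C) (γ₁ γ₂ g h : M2R)
    (hγ₁ : γ₁ ∈ GammaInf) (hγ₂ : γ₂ ∈ GammaInf) :
    chiF k s (emb (γ₁ * g) (γ₂ * h)) Z = chiF k s (emb g h) Z := by
  have hJ : jfac (emb (γ₁ * g) (γ₂ * h)) Z
      = ((γ₁ 1 1 * γ₂ 1 1 : ℝ) : ℂ) * jfac (emb g h) Z := by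
    rw [akbk_jfac_emb, akbk_jfac_emb,
      akbk_mul_row γ₁ g hγ₁.2 0, akbk_mul_row γ₁ g hγ₁.2 1,
      akbk_mul_row γ₂ h hγ₂.2 0, akbk_mul_row γ₂ h hγ₂.2 1]
    push_cast
    ring
  have hε : (γ₁ 1 1 * γ₂ 1 1 : ℝ) = 1 ∨ (γ₁ 1 1 * γ₂ 1 1 : ℝ) = -1 := by
    rcases akbk_gammaInf_d hγ₁ with h1 | h1 <;> rcases akbk_gammaInf_d hγ₂ with h2 | h2 <;>
      rw [h1, h2] <;> norm_num
  rcases hε with hε | hε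
  · rw [chiF, chiF, hJ, hε]
    norm_num
  · rw [chiF, chiF, hJ, hε]
    push_cast
    rw [neg_one_mul, Even.neg_zpow hk.neg, norm_neg]

lemma akbk_norm_vec_n1 (n : ℤ) : ‖![n, 1]‖ = max |(n:ℝ)| 1 := by
  rw [EisensteinSeries.norm_eq_max_natAbs]
  simp [Nat.cast_max, Nat.cast_natAbs]

lemma akbk_prod_bound (C p r n₁ n₂ Jabs : ℝ) (hC : 0 ≤ C) (hp : 0 < p) (hr : 0 < r)
    (hn₁ : 0 < n₁) (hn₂ : 0 < n₂) (hJ : (p*n₁)*(r*n₂) ≤ Jabs) (e : ℝ) (he : 0 ≤ e) :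
    C * Jabs ^ (-e) ≤ (C * p^(-e) * n₁ ^ (-e)) * (r^(-e) * n₂^(-e)) := by
  have h1 : Jabs ^ (-e) ≤ ((p*n₁)*(r*n₂)) ^ (-e) :=
    akbk_rpow_neg_mono (by positivity) hJ he
  have h2 : ((p*n₁)*(r*n₂)) ^ (-e) = p^(-e)*n₁^(-e)*(r^(-e)*n₂^(-e)) := by
    rw [Real.mul_rpow (by positivity) (by positivity), Real.mul_rpow hp.le hn₁.le,
      Real.mul_rpow hr.le hn₂.le]
  calc C * Jabs^(-e) ≤ C * (((p*n₁)*(r*n₂))^(-e)) := mul_le_mul_of_nonneg_left h1 hC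
    _ = (C * p^(-e) * n₁^(-e)) * (r^(-e) * n₂^(-e)) := by rw [h2]; ring

end AkBkAux

set_option maxHeartbeats 1000000 in
/-- (i) `Im φ(Z) > 0` on `ℍ₂`; (ii) absolute convergence of the double series
defining `A_k(Z,s)`; (iii) absolute convergence of the series defining `B_k(Z,s)`. -/
theorem Ak_Bk_converge (k : ℤ) (hk : Even k) (s : ℂ) (hs : 2 * s.re + (k : ℝ) > 3)
    (Z : M2C) (hZ : Z ∈ SiegelH2) :
    0 < (phiF Z).im ∧
    (∃ F : Quot relInf × Quot relInf → ℂ,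
      (∀ g h : SL2ZT, F (Quot.mk relInf g, Quot.mk relInf h)
          = ((Hdelta Z : ℂ)) ^ s * chiF k s (embUp g.1 * embLow h.1) Z) ∧
      Summable (fun q => ‖F q‖)) ∧
    Summable (fun g : SL2ZT =>
      ‖((Hdelta Z : ℂ)) ^ s * (PhiF k s (smul4 (embLow g.1) Z) * chiF k s (embLow g.1) Z)‖) := by
  obtain ⟨hZs, hY⟩ := hZ
  have hsym : Z 1 0 = Z 0 1 := by
    conv_lhs => rw [show Z 1 0 = Zᵀ 0 1 from rfl, hZs]
  have hy : 0 < (Z 0 0).im := by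
    have h2 := hY.dotProduct_mulVec_pos (x := ![1,0]) (by intro hc; simpa using congrFun hc 0)
    simpa [dotProduct, Matrix.mulVec, Fin.sum_univ_two, ImM] using h2
  have hy' : 0 < (Z 1 1).im := by
    have h2 := hY.dotProduct_mulVec_pos (x := ![0,1]) (by intro hc; simpa using congrFun hc 1)
    simpa [dotProduct, Matrix.mulVec, Fin.sum_univ_two, ImM] using h2
  have hδ : 0 < Hdelta Z := hY.det_pos
  have hδeq : Hdelta Z = (Z 0 0).im * (Z 1 1).im - (Z 0 1).im^2 := by
    rw [Hdelta, Matrix.det_fin_two]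
    simp only [ImM, Matrix.map_apply]
    rw [hsym]; ring
  have hpart1 : 0 < (phiF Z).im := by
    have h2 := hY.dotProduct_mulVec_pos (x := ![1,1]) (by intro hc; simpa using congrFun hc 0)
    have h3 : 0 < (Z 0 0).im + (Z 0 1).im + ((Z 1 0).im + (Z 1 1).im) := by
      simpa [dotProduct, Matrix.mulVec, Fin.sum_univ_two, ImM] using h2
    rw [hsym] at h3
    simp only [phiF, Complex.add_im, Complex.mul_im, Complex.re_ofNat, Complex.im_ofNat]
    linarith
  -- constants
  have hα3 : 3 < (k:ℝ) + 2*s.re := by linarith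
  have hα2 : 2 < (k:ℝ) + 2*s.re := by linarith
  have hα0 : 0 ≤ (k:ℝ) + 2*s.re := by linarith
  have hCδ : 0 < Hdelta Z ^ s.re := Real.rpow_pos_of_pos hδ _
  set β : ℝ := Hdelta Z / (Z 1 1).im with hβdef
  have hβ : 0 < β := div_pos hδ hy'
  set r₀ : ℝ := EisensteinSeries.r ⟨Z 1 1, hy'⟩ with hr₀def
  have hr₀ : 0 < r₀ := EisensteinSeries.r_pos _
  set AA : ℝ := |(Z 0 0).re|
      + (‖Z 0 1‖ * ‖Z 0 1‖)/(Z 1 1).im with hAAdef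
  set ρ : ℝ := EisensteinSeries.r ⟨⟨AA, β⟩, hβ⟩ with hρdef
  have hρ : 0 < ρ := EisensteinSeries.r_pos _
  -- generic facts about integer rows
  have hjxlow : ∀ x : Fin 2 → ℤ, x ≠ 0 →
      r₀ * ‖x‖ ≤ ‖((x 0:ℝ):ℂ) * Z 1 1 + ((x 1:ℝ):ℂ)‖ := by
    intro x hx
    have h := EisensteinSeries.r_mul_max_le (⟨Z 1 1, hy'⟩ : UpperHalfPlane) hx
    rw [hr₀def]
    simpa [Complex.ofReal_intCast] using h
  have hjxpos : ∀ x : Fin 2 → ℤ, x ≠ 0 →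
      0 < ‖((x 0:ℝ):ℂ) * Z 1 1 + ((x 1:ℝ):ℂ)‖ :=
    fun x hx => lt_of_lt_of_le (mul_pos hr₀ (akbk_norm_int_vec_pos hx)) (hjxlow x hx)
  have hjxne : ∀ x : Fin 2 → ℤ, x ≠ 0 →
      (((x 0:ℝ):ℂ) * Z 1 1 + ((x 1:ℝ):ℂ)) ≠ 0 :=
    fun x hx => norm_pos_iff.mp (hjxpos x hx)
  -- the auxiliary point w attached to a row
  have hw : ∀ x : Fin 2 → ℤ, x ≠ 0 →
      β ≤ (Z 0 0 - ((x 0:ℝ):ℂ)*(Z 0 1 * Z 0 1)/(((x 0:ℝ):ℂ) * Z 1 1 + ((x 1:ℝ):ℂ))).im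
      ∧ |(Z 0 0 - ((x 0:ℝ):ℂ)*(Z 0 1 * Z 0 1)/(((x 0:ℝ):ℂ) * Z 1 1 + ((x 1:ℝ):ℂ))).re| ≤ AA := by
    intro x hx
    have hjne := hjxne x hx
    have hjpos := hjxpos x hx
    constructor
    · rw [hβdef, hδeq]
      exact akbk_im_w_ge (Z 0 0) (Z 0 1) (Z 1 1) (x 0 : ℝ) (x 1 : ℝ) hy' hjne
    · set jx : ℂ := ((x 0:ℝ):ℂ) * Z 1 1 + ((x 1:ℝ):ℂ) with hjxdef
      have habs : ‖((x 0:ℝ):ℂ)*(Z 0 1 * Z 0 1)/jx‖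
          ≤ (‖Z 0 1‖ * ‖Z 0 1‖)/(Z 1 1).im := by
        rw [norm_div, norm_mul, norm_mul, Complex.norm_real, Real.norm_eq_abs]
        rw [div_le_div_iff₀ hjpos hy']
        have him_le : |(x 0 : ℝ)| * (Z 1 1).im ≤ ‖jx‖ := by
          have h1 : |jx.im| ≤ ‖jx‖ := Complex.abs_im_le_norm jx
          have h2 : jx.im = (x 0 : ℝ) * (Z 1 1).im := by simp [hjxdef]
          rw [h2, abs_mul, abs_of_pos hy'] at h1
          exact h1
        nlinarith [him_le, norm_nonneg (Z 0 1), norm_nonneg jx,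
          abs_nonneg ((x 0 : ℝ)), mul_le_mul_of_nonneg_right him_le
            (mul_nonneg (norm_nonneg (Z 0 1)) (norm_nonneg (Z 0 1)))]
      have hrwe : (Z 0 0 - ((x 0:ℝ):ℂ)*(Z 0 1 * Z 0 1)/jx).re
          = (Z 0 0).re - (((x 0:ℝ):ℂ)*(Z 0 1 * Z 0 1)/jx).re := by
        simp [Complex.sub_re]
      rw [hrwe, hAAdef]
      have h5 : |(((x 0:ℝ):ℂ)*(Z 0 1 * Z 0 1)/jx).re|
          ≤ ‖((x 0:ℝ):ℂ)*(Z 0 1 * Z 0 1)/jx‖ := Complex.abs_re_le_norm _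
      have h6 := abs_sub ((Z 0 0).re) ((((x 0:ℝ):ℂ)*(Z 0 1 * Z 0 1)/jx).re)
      calc |(Z 0 0).re - (((x 0:ℝ):ℂ)*(Z 0 1 * Z 0 1)/jx).re|
          ≤ |(Z 0 0).re| + |(((x 0:ℝ):ℂ)*(Z 0 1 * Z 0 1)/jx).re| := abs_sub _ _
        _ ≤ |(Z 0 0).re| + (‖Z 0 1‖ * ‖Z 0 1‖)/(Z 1 1).im := by
            linarith
  -- injectivity of the row map on cosets
  have qinj : ∀ q q' : Quot relInf, akbk_rowInt (qout q) = akbk_rowInt (qout q') → q = q' := by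
    intro q q' hrow
    have h0 : (qout q).1 1 0 = (qout q').1 1 0 := by
      rw [akbk_rowInt_spec, akbk_rowInt_spec, hrow]
    have h1 : (qout q).1 1 1 = (qout q').1 1 1 := by
      rw [akbk_rowInt_spec, akbk_rowInt_spec, hrow]
    obtain ⟨t, ht⟩ := akbk_row_shift h0 h1
    have hrel : relInf (qout q) (qout q') := ⟨_, akbk_T_mem_GammaInf t, ht⟩
    rw [← akbk_qout_spec q, ← akbk_qout_spec q']
    exact Quot.sound hrel
  -- lower bound for jfac (emb g h)
  have hJbound : ∀ g h : SL2ZT,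
      (ρ * ‖akbk_rowInt g‖) * (r₀ * ‖akbk_rowInt h‖)
        ≤ ‖jfac (emb g.1 h.1) Z‖ := by
    intro g h
    have hx₁ := akbk_rowInt_ne_zero g
    have hx₂ := akbk_rowInt_ne_zero h
    set x₁ := akbk_rowInt g with hx₁def
    set x₂ := akbk_rowInt h with hx₂def
    set jx : ℂ := ((x₂ 0:ℝ):ℂ) * Z 1 1 + ((x₂ 1:ℝ):ℂ) with hjxdef
    have hjne : jx ≠ 0 := by rw [hjxdef]; exact hjxne x₂ hx₂
    set w : ℂ := Z 0 0 - ((x₂ 0:ℝ):ℂ)*(Z 0 1 * Z 0 1)/jx with hwdef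
    obtain ⟨hwim, hwre⟩ := hw x₂ hx₂
    have hwim0 : 0 < w.im := lt_of_lt_of_le hβ hwim
    have hρw : ρ ≤ EisensteinSeries.r ⟨w, hwim0⟩ := by
      rw [hρdef]
      exact EisensteinSeries.r_lower_bound_on_verticalStrip (⟨w, hwim0⟩ : UpperHalfPlane)
        hβ ⟨hwre, hwim⟩
    have h1 : ρ * ‖x₁‖ ≤ ‖((x₁ 0:ℝ):ℂ) * w + ((x₁ 1:ℝ):ℂ)‖ := by
      have h2 := EisensteinSeries.r_mul_max_le (⟨w, hwim0⟩ : UpperHalfPlane) hx₁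
      have h3 : ρ * ‖x₁‖ ≤ EisensteinSeries.r ⟨w, hwim0⟩ * ‖x₁‖ :=
        mul_le_mul_of_nonneg_right hρw (norm_nonneg _)
      refine le_trans h3 ?_
      simpa [Complex.ofReal_intCast] using h2
    have hfac : jfac (emb g.1 h.1) Z = jx * (((x₁ 0:ℝ):ℂ) * w + ((x₁ 1:ℝ):ℂ)) := by
      rw [akbk_jfac_emb, akbk_rowInt_spec g 0, akbk_rowInt_spec g 1, akbk_rowInt_spec h 0,
        akbk_rowInt_spec h 1, hsym, hwdef, hjxdef]
      have hjne2 : ((x₂ 0:ℤ):ℂ) * Z 1 1 + ((x₂ 1:ℤ):ℂ) ≠ 0 := by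
        have := hjne; rw [hjxdef] at this; push_cast at this ⊢; exact this
      have hjne3 : ((x₂ 0:ℝ):ℂ) * Z 1 1 + ((x₂ 1:ℝ):ℂ) ≠ 0 := hjne
      simp only [hx₁def, hx₂def] at hjne3 ⊢
      field_simp [hjne3]
      ring
    rw [hfac, norm_mul]
    calc (ρ * ‖x₁‖) * (r₀ * ‖x₂‖) = (r₀ * ‖x₂‖) * (ρ * ‖x₁‖) := by ring
      _ ≤ ‖jx‖ * ‖((x₁ 0:ℝ):ℂ) * w + ((x₁ 1:ℝ):ℂ)‖ := by
          apply mul_le_mul (hjxlow x₂ hx₂) h1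
            (mul_pos hρ (akbk_norm_int_vec_pos hx₁)).le (norm_nonneg _)
  refine ⟨hpart1, ?_, ?_⟩
  · -- part (ii)
    refine ⟨fun q => ((Hdelta Z : ℂ)) ^ s
        * chiF k s (embUp (qout q.1).1 * embLow (qout q.2).1) Z, ?_, ?_⟩
    · -- the value on cosets
      intro g h
      have r1 : relInf (qout (Quot.mk relInf g)) g :=
        (akbk_relInf_equivalence.eqvGen_iff).mp (Quot.eq.mp (akbk_qout_spec _))
      have r2 : relInf (qout (Quot.mk relInf h)) h :=
        (akbk_relInf_equivalence.eqvGen_iff).mp (Quot.eq.mp (akbk_qout_spec _))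
      obtain ⟨γ₁, hγ₁, hg1⟩ := r1
      obtain ⟨γ₂, hγ₂, hg2⟩ := r2
      refine congrArg (fun t => ((Hdelta Z : ℂ)) ^ s * t) ?_
      rw [akbk_embUp_mul_embLow, akbk_embUp_mul_embLow, hg1, hg2]
      exact (akbk_chiF_inv k hk s Z γ₁ γ₂ _ _ hγ₁ hγ₂).symm
    · -- summability
      have hG : Summable (fun p : (Fin 2 → ℤ) × (Fin 2 → ℤ) =>
          ((Hdelta Z ^ s.re * ρ ^ (-((k:ℝ) + 2*s.re))) * ‖p.1‖ ^ (-((k:ℝ) + 2*s.re)))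
            * ((r₀ ^ (-((k:ℝ) + 2*s.re))) * ‖p.2‖ ^ (-((k:ℝ) + 2*s.re)))) := by
        refine Summable.mul_of_nonneg
          (f := fun x : Fin 2 → ℤ =>
            (Hdelta Z ^ s.re * ρ ^ (-((k:ℝ) + 2*s.re))) * ‖x‖ ^ (-((k:ℝ) + 2*s.re)))
          (g := fun x : Fin 2 → ℤ => (r₀ ^ (-((k:ℝ) + 2*s.re))) * ‖x‖ ^ (-((k:ℝ) + 2*s.re)))
          ((EisensteinSeries.summable_one_div_norm_rpow hα2).mul_left _)
          ((EisensteinSeries.summable_one_div_norm_rpow hα2).mul_left _)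
          (fun x => by positivity) (fun x => by positivity)
      have hinj : Function.Injective (fun q : Quot relInf × Quot relInf =>
          ((akbk_rowInt (qout q.1), akbk_rowInt (qout q.2)) : (Fin 2 → ℤ) × (Fin 2 → ℤ))) := by
        intro q q' hq
        simp only [Prod.mk.injEq] at hq
        exact Prod.ext (qinj _ _ hq.1) (qinj _ _ hq.2)
      apply Summable.of_nonneg_of_le (fun q => norm_nonneg _) _ (hG.comp_injective hinj)
      intro q
      have hJb := hJbound (qout q.1) (qout q.2)
      have hJpos : 0 < ‖jfac (emb (qout q.1).1 (qout q.2).1) Z‖ :=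
        lt_of_lt_of_le (mul_pos (mul_pos hρ (akbk_norm_int_vec_pos (akbk_rowInt_ne_zero _)))
          (mul_pos hr₀ (akbk_norm_int_vec_pos (akbk_rowInt_ne_zero _)))) hJb
      have hJne : jfac (emb (qout q.1).1 (qout q.2).1) Z ≠ 0 :=
        norm_pos_iff.mp hJpos
      have hnorm : ‖((Hdelta Z : ℂ)) ^ s
            * chiF k s (embUp (qout q.1).1 * embLow (qout q.2).1) Z‖
          = Hdelta Z ^ s.re
            * ‖jfac (emb (qout q.1).1 (qout q.2).1) Z‖ ^ (-((k:ℝ) + 2*s.re)) := by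
        rw [akbk_embUp_mul_embLow, norm_mul, akbk_norm_real_cpow _ hδ, chiF,
          akbk_norm_chi_shape k s _ hJne]
      rw [hnorm]
      exact akbk_prod_bound (Hdelta Z ^ s.re) ρ r₀ ‖akbk_rowInt (qout q.1)‖
        ‖akbk_rowInt (qout q.2)‖ _ hCδ.le hρ hr₀
        (akbk_norm_int_vec_pos (akbk_rowInt_ne_zero _))
        (akbk_norm_int_vec_pos (akbk_rowInt_ne_zero _)) hJb _ hα0
  · -- part (iii)
    have hneg : ∀ g : SL2ZT, ((g.1 1 0:ℝ):ℂ)*Z 1 1 + ((g.1 1 1:ℝ):ℂ) ≠ 0 := by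
      intro g
      rw [akbk_rowInt_spec g 0, akbk_rowInt_spec g 1]
      exact hjxne _ (akbk_rowInt_ne_zero g)
    have hjfac : ∀ g : SL2ZT, jfac (embLow g.1) Z
        = ((g.1 1 0:ℝ):ℂ) * Z 1 1 + ((g.1 1 1:ℝ):ℂ) := fun g => akbk_jfac_embLow g.1 Z
    have hjne : ∀ g : SL2ZT, jfac (embLow g.1) Z ≠ 0 := fun g => (hjfac g) ▸ hneg g
    have hjlow : ∀ g : SL2ZT, r₀ * ‖akbk_rowInt g‖ ≤ ‖jfac (embLow g.1) Z‖ := by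
      intro g
      rw [hjfac g, akbk_rowInt_spec g 0, akbk_rowInt_spec g 1]
      exact hjxlow _ (akbk_rowInt_ne_zero g)
    have hφeq : ∀ g : SL2ZT, phiF (smul4 (embLow g.1) Z)
        = Z 0 0 + (2*Z 0 1 + ((g.1 0 0:ℝ):ℂ)*Z 1 1 + ((g.1 0 1:ℝ):ℂ)
            - ((g.1 1 0:ℝ):ℂ)*(Z 0 1 * Z 0 1))
          / (((g.1 1 0:ℝ):ℂ)*Z 1 1 + ((g.1 1 1:ℝ):ℂ)) := by
      intro g
      rw [akbk_phi_smul_embLow g.1 Z (hneg g), hsym]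
    have hφim : ∀ g : SL2ZT, β ≤ (phiF (smul4 (embLow g.1) Z)).im := by
      intro g
      have hdetg : g.1 0 0 * g.1 1 1 - g.1 0 1 * g.1 1 0 = 1 := by
        have h := g.1.det_fin_two; rw [g.2.1] at h; linarith
      rw [hφeq g, hβdef, hδeq]
      exact akbk_im_phi_ge (Z 0 0) (Z 0 1) (Z 1 1) (g.1 0 0) (g.1 0 1) (g.1 1 0) (g.1 1 1)
        hdetg hy' (hneg g)
    have hφne : ∀ g : SL2ZT, phiF (smul4 (embLow g.1) Z) ≠ 0 := by
      intro g h0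
      have h1 := hφim g
      rw [h0] at h1
      simp only [Complex.zero_im] at h1
      linarith
    have hφabsβ : ∀ g : SL2ZT, β ≤ ‖phiF (smul4 (embLow g.1) Z)‖ :=
      fun g => le_trans (hφim g) (le_trans (le_abs_self _) (Complex.abs_im_le_norm _))
    set c' : ℝ := min β (1/2) with hc'def
    have hc' : 0 < c' := lt_min hβ (by norm_num)
    have hvne : ∀ n : ℤ, (![n, 1] : Fin 2 → ℤ) ≠ 0 := by
      intro n h
      have := congrFun h 1
      simp at this
    have hφabs : ∀ g : SL2ZT, c' * ‖(![⌊(phiF (smul4 (embLow g.1) Z)).re⌋, 1] : Fin 2 → ℤ)‖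
        ≤ ‖phiF (smul4 (embLow g.1) Z)‖ := by
      intro g
      set φ := phiF (smul4 (embLow g.1) Z) with hφdef
      set n : ℤ := ⌊φ.re⌋ with hndef
      rw [akbk_norm_vec_n1]
      have hre : |φ.re| ≤ ‖φ‖ := Complex.abs_re_le_norm φ
      have hfl : |(n:ℝ)| - 1 ≤ |φ.re| := by
        rcases le_or_gt 0 n with hn | hn
        · have h1 : (n:ℝ) ≤ φ.re := Int.floor_le φ.re
          have h2 : |(n:ℝ)| = (n:ℝ) := abs_of_nonneg (by exact_mod_cast hn)
          have h3 := le_abs_self φ.re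
          linarith
        · have h1 : φ.re < (n:ℝ) + 1 := Int.lt_floor_add_one φ.re
          have h2 : |(n:ℝ)| = -(n:ℝ) := abs_of_neg (by exact_mod_cast hn)
          have h3 := neg_le_abs φ.re
          linarith
      rcases le_or_gt (|(n:ℝ)|) 1 with h1 | h1
      · rw [max_eq_right h1]
        have h2 := min_le_left β (1/2:ℝ)
        have h3 := hφabsβ g
        rw [hc'def]
        linarith
      · rw [max_eq_left h1.le]
        have h2 : (2:ℝ) ≤ |(n:ℝ)| := by
          have h4 : (1:ℤ) < |n| := by
            have : ((1:ℤ):ℝ) < ((|n|:ℤ):ℝ) := by rw [Int.cast_abs]; exact_mod_cast h1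
            exact_mod_cast this
          have h5 : (2:ℤ) ≤ |n| := h4
          calc (2:ℝ) = ((2:ℤ):ℝ) := by norm_num
            _ ≤ ((|n|:ℤ):ℝ) := by exact_mod_cast h5
            _ = |(n:ℝ)| := by rw [Int.cast_abs]
        have h3 : c' * |(n:ℝ)| ≤ (1/2) * |(n:ℝ)| :=
          mul_le_mul_of_nonneg_right (min_le_right _ _) (abs_nonneg _)
        have h4 : (1/2:ℝ) * |(n:ℝ)| ≤ |(n:ℝ)| - 1 := by linarith
        linarith
    -- summable majorant
    have hG : Summable (fun p : (Fin 2 → ℤ) × (Fin 2 → ℤ) =>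
        ((Hdelta Z ^ s.re * r₀ ^ (-((k:ℝ) + 2*s.re))) * ‖p.1‖ ^ (-((k:ℝ) + 2*s.re)))
          * ((c' ^ (-((k:ℝ) + 2*s.re))) * ‖p.2‖ ^ (-((k:ℝ) + 2*s.re)))) := by
      refine Summable.mul_of_nonneg
        (f := fun x : Fin 2 → ℤ =>
          (Hdelta Z ^ s.re * r₀ ^ (-((k:ℝ) + 2*s.re))) * ‖x‖ ^ (-((k:ℝ) + 2*s.re)))
        (g := fun x : Fin 2 → ℤ => (c' ^ (-((k:ℝ) + 2*s.re))) * ‖x‖ ^ (-((k:ℝ) + 2*s.re)))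
        ((EisensteinSeries.summable_one_div_norm_rpow hα2).mul_left _)
        ((EisensteinSeries.summable_one_div_norm_rpow hα2).mul_left _)
        (fun x => by positivity) (fun x => by positivity)
    -- the injection
    have hinj : Function.Injective (fun g : SL2ZT =>
        ((akbk_rowInt g, ![⌊(phiF (smul4 (embLow g.1) Z)).re⌋, 1])
          : (Fin 2 → ℤ) × (Fin 2 → ℤ))) := by
      intro g g' hgg
      simp only [Prod.mk.injEq] at hgg
      obtain ⟨hrow, hn⟩ := hgg
      have h0 : g.1 1 0 = g'.1 1 0 := by rw [akbk_rowInt_spec, akbk_rowInt_spec, hrow]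
      have h1 : g.1 1 1 = g'.1 1 1 := by rw [akbk_rowInt_spec, akbk_rowInt_spec, hrow]
      obtain ⟨t, ht⟩ := akbk_row_shift h0 h1
      have ha : g'.1 0 0 = g.1 0 0 + t * g.1 1 0 := by
        rw [ht, Matrix.mul_apply, Fin.sum_univ_two]; simp
      have hb : g'.1 0 1 = g.1 0 1 + t * g.1 1 1 := by
        rw [ht, Matrix.mul_apply, Fin.sum_univ_two]; simp
      have hshift : phiF (smul4 (embLow g'.1) Z)
          = phiF (smul4 (embLow g.1) Z) + ((t:ℝ):ℂ) := by
        rw [hφeq g', hφeq g, ha, hb, ← h0, ← h1]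
        have hne2 := hneg g
        push_cast
        push_cast at hne2
        field_simp
        ring
      have hnfl : ⌊(phiF (smul4 (embLow g'.1) Z)).re⌋
          = ⌊(phiF (smul4 (embLow g.1) Z)).re⌋ + t := by
        rw [hshift, Complex.add_re, Complex.ofReal_re]
        exact_mod_cast Int.floor_add_intCast _ t
      have h2 : ⌊(phiF (smul4 (embLow g.1) Z)).re⌋ = ⌊(phiF (smul4 (embLow g'.1) Z)).re⌋ := by
        have := congrFun hn 0
        simpa using this
      have ht0 : t = 0 := by omega
      apply Subtype.ext
      rw [ht, ht0]
      simp [Matrix.one_fin_two.symm]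
    -- conclude
    apply Summable.of_nonneg_of_le (fun g => norm_nonneg _) _ (hG.comp_injective hinj)
    intro g
    have hnorm : ‖((Hdelta Z : ℂ)) ^ s
          * (PhiF k s (smul4 (embLow g.1) Z) * chiF k s (embLow g.1) Z)‖
        = Hdelta Z ^ s.re * (‖phiF (smul4 (embLow g.1) Z)‖ ^ (-((k:ℝ) + 2*s.re))
            * ‖jfac (embLow g.1) Z‖ ^ (-((k:ℝ) + 2*s.re))) := by
      rw [norm_mul, norm_mul, akbk_norm_real_cpow _ hδ, PhiF,
        akbk_norm_chi_shape k s _ (hφne g), chiF, akbk_norm_chi_shape k s _ (hjne g)]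
    rw [hnorm]
    have hcomb : ‖phiF (smul4 (embLow g.1) Z)‖ ^ (-((k:ℝ) + 2*s.re))
          * ‖jfac (embLow g.1) Z‖ ^ (-((k:ℝ) + 2*s.re))
        = (‖jfac (embLow g.1) Z‖
            * ‖phiF (smul4 (embLow g.1) Z)‖) ^ (-((k:ℝ) + 2*s.re)) := by
      rw [Real.mul_rpow (norm_nonneg _) (norm_nonneg _)]
      ring
    rw [hcomb]
    have hJ : (r₀ * ‖akbk_rowInt g‖)
          * (c' * ‖(![⌊(phiF (smul4 (embLow g.1) Z)).re⌋, 1] : Fin 2 → ℤ)‖)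
        ≤ ‖jfac (embLow g.1) Z‖
          * ‖phiF (smul4 (embLow g.1) Z)‖ :=
      mul_le_mul (hjlow g) (hφabs g)
        (mul_pos hc' (akbk_norm_int_vec_pos (hvne _))).le (norm_nonneg _)
    exact akbk_prod_bound (Hdelta Z ^ s.re) r₀ c' ‖akbk_rowInt g‖
      ‖(![⌊(phiF (smul4 (embLow g.1) Z)).re⌋, 1] : Fin 2 → ℤ)‖ _ hCδ.le hr₀ hc'
      (akbk_norm_int_vec_pos (akbk_rowInt_ne_zero _))
      (akbk_norm_int_vec_pos (hvne _)) hJ _ hα0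


end
end

section
/- Let k be an even integer, let F : ℍ₂ → ℂ satisfy F|_k γ = F for all γ ∈ Γ₂ = Sp₂(ℤ), and let p be a prime. Then F|T_p• = F|T_p_• (as functions on ℍ₂) if and only if for all τ, τ' ∈ ℂ with Im τ > 0, Im τ' > 0 and all z ∈ ℂ with p·(Im z)² < (Im τ)·(Im τ'): p^{k−1}·F([[pτ, pz],[pz, τ']]) + p^{−1}·Σ_{λ=0}^{p−1} F([[(τ+λ)/p, z],[z, τ']]) = p^{k−1}·F([[τ, pz],[pz, pτ']]) + p^{−1}·Σ_{μ=0}^{p−1} F([[τ, z],[z, (τ'+μ)/p]]). -/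
open Matrix Complex Filter Topology

noncomputable section

-- ===== auxiliary lemmas =====

lemma mapC_fin2 (a b c d : ℝ) : (!![a,b;c,d]).map (fun t => (t:ℂ)) = !![(a:ℂ),b;c,d] := by
  ext i j; fin_cases i <;> fin_cases j <;> simp

lemma smul_fin2 (r a b c d : ℝ) : r • (!![a,b;c,d] : M2R) = !![r*a,r*b;r*c,r*d] := by
  ext i j; fin_cases i <;> fin_cases j <;> simp

lemma slash_tri_up (k : ℤ) (x y w : ℝ) (hw : w ≠ 0) (F : M2C → ℂ) (τ ζ ζ' τ' : ℂ) :
    slashOp k (emb !![x, y; 0, w] 1) F !![τ, ζ; ζ', τ'] =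
      ((w:ℂ))^(-k) * F !![((x:ℂ)*τ + y)/w, (x:ℂ)*ζ; ζ'/(w:ℂ), τ'] := by
  have hwC : (w:ℂ) ≠ 0 := by exact_mod_cast hw
  have h11 : (mapC (emb !![x, y; 0, w] 1)).toBlocks₁₁ = !![(x:ℂ),0;0,1] := by
    simp [mapC, emb, Matrix.fromBlocks_map, mapC_fin2]
  have h12 : (mapC (emb !![x, y; 0, w] 1)).toBlocks₁₂ = !![(y:ℂ),0;0,0] := by
    simp [mapC, emb, Matrix.fromBlocks_map, mapC_fin2]
  have h21 : (mapC (emb !![x, y; 0, w] 1)).toBlocks₂₁ = 0 := by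
    simp [mapC, emb, Matrix.fromBlocks_map, mapC_fin2]
    ext i j; fin_cases i <;> fin_cases j <;> simp
  have h22 : (mapC (emb !![x, y; 0, w] 1)).toBlocks₂₂ = !![(w:ℂ),0;0,1] := by
    simp [mapC, emb, Matrix.fromBlocks_map, mapC_fin2]
  have hinv : (!![(w:ℂ),0;0,1])⁻¹ = !![(w:ℂ)⁻¹,0;0,1] := by
    apply Matrix.inv_eq_right_inv
    rw [Matrix.mul_fin_two]
    norm_num [mul_inv_cancel₀ hwC]
    ext i j; fin_cases i <;> fin_cases j <;> simp
  have hj : jfac (emb !![x, y; 0, w] 1) !![τ, ζ; ζ', τ'] = (w:ℂ) := by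
    simp [jfac, h21, h22, Matrix.det_fin_two_of]
  have hs : smul4 (emb !![x, y; 0, w] 1) !![τ, ζ; ζ', τ'] = !![((x:ℂ)*τ + y)/w, (x:ℂ)*ζ; ζ'/(w:ℂ), τ'] := by
    simp only [smul4, h11, h12, h21, h22, Matrix.zero_mul, zero_add, hinv]
    ext i j
    fin_cases i <;> fin_cases j <;>
      simp [Matrix.mul_apply, Fin.sum_univ_two, div_eq_mul_inv] <;> ring
  rw [slashOp, hj, hs]

lemma slash_tri_low (k : ℤ) (x y w : ℝ) (hw : w ≠ 0) (F : M2C → ℂ) (τ ζ ζ' τ' : ℂ) :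
    slashOp k (emb 1 !![x, y; 0, w]) F !![τ, ζ; ζ', τ'] =
      ((w:ℂ))^(-k) * F !![τ, ζ/(w:ℂ); (x:ℂ)*ζ', ((x:ℂ)*τ' + y)/w] := by
  have hwC : (w:ℂ) ≠ 0 := by exact_mod_cast hw
  have h11 : (mapC (emb 1 !![x, y; 0, w])).toBlocks₁₁ = !![1,0;0,(x:ℂ)] := by
    simp [mapC, emb, Matrix.fromBlocks_map, mapC_fin2]
  have h12 : (mapC (emb 1 !![x, y; 0, w])).toBlocks₁₂ = !![0,0;0,(y:ℂ)] := by
    simp [mapC, emb, Matrix.fromBlocks_map, mapC_fin2]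
  have h21 : (mapC (emb 1 !![x, y; 0, w])).toBlocks₂₁ = 0 := by
    simp [mapC, emb, Matrix.fromBlocks_map, mapC_fin2]
    ext i j; fin_cases i <;> fin_cases j <;> simp
  have h22 : (mapC (emb 1 !![x, y; 0, w])).toBlocks₂₂ = !![1,0;0,(w:ℂ)] := by
    simp [mapC, emb, Matrix.fromBlocks_map, mapC_fin2]
  have hinv : (!![(1:ℂ),0;0,(w:ℂ)])⁻¹ = !![1,0;0,(w:ℂ)⁻¹] := by
    apply Matrix.inv_eq_right_inv
    rw [Matrix.mul_fin_two]
    norm_num [mul_inv_cancel₀ hwC]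
    ext i j; fin_cases i <;> fin_cases j <;> simp
  have hj : jfac (emb 1 !![x, y; 0, w]) !![τ, ζ; ζ', τ'] = (w:ℂ) := by
    simp [jfac, h21, h22, Matrix.det_fin_two_of]
  have hs : smul4 (emb 1 !![x, y; 0, w]) !![τ, ζ; ζ', τ'] = !![τ, ζ/(w:ℂ); (x:ℂ)*ζ', ((x:ℂ)*τ' + y)/w] := by
    simp only [smul4, h11, h12, h21, h22, Matrix.zero_mul, zero_add, hinv]
    ext i j
    fin_cases i <;> fin_cases j <;>
      simp [Matrix.mul_apply, Fin.sum_univ_two, div_eq_mul_inv] <;> ring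
  rw [slashOp, hj, hs]

lemma cpow_half_int (k : ℤ) (p : ℕ) (hp : 0 < p) :
    ((p:ℕ):ℂ) ^ ((k:ℂ)/2 - 1) = ((Real.sqrt p : ℝ):ℂ)^k / ((p:ℕ):ℂ) := by
  have hp0 : (0:ℝ) < (p:ℝ) := by exact_mod_cast hp
  have hP0 : ((p:ℕ):ℂ) ≠ 0 := by exact_mod_cast hp.ne'
  have h1 : ((p:ℕ):ℂ) ^ ((k:ℂ)/2) = ((Real.sqrt p : ℝ):ℂ)^k := by
    have hr : (p:ℝ) ^ ((k:ℝ)/2) = (Real.sqrt p) ^ k := by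
      rw [Real.sqrt_eq_rpow, show (k:ℝ)/2 = (1/2)*(k:ℝ) by ring, Real.rpow_mul hp0.le,
        Real.rpow_intCast]
    calc ((p:ℕ):ℂ) ^ ((k:ℂ)/2) = ((p:ℝ):ℂ) ^ ((((k:ℝ)/2 : ℝ)):ℂ) := by push_cast; ring_nf
      _ = (((p:ℝ) ^ ((k:ℝ)/2) : ℝ) : ℂ) := by rw [← Complex.ofReal_cpow hp0.le]
      _ = ((Real.sqrt p : ℝ):ℂ)^k := by rw [hr]; push_cast; ring
  rw [show ((k:ℂ)/2 - 1) = ((k:ℂ)/2 - (1:ℂ)) by ring, Complex.cpow_sub _ _ hP0,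
    Complex.cpow_one, h1]

lemma posdef_fin2_iff (a b c : ℝ) :
    (!![a,b;b,c] : M2R).PosDef ↔ 0 < a ∧ 0 < c ∧ b^2 < a*c := by
  constructor
  · intro h
    have h0 := h.dotProduct_mulVec_pos (x := ![1,0]) (by
      intro hx; have := congrFun hx 0; norm_num at this)
    have h1 := h.dotProduct_mulVec_pos (x := ![0,1]) (by
      intro hx; have := congrFun hx 1; norm_num at this)
    have hdet := h.det_pos
    rw [Matrix.det_fin_two_of] at hdet
    simp [dotProduct, Matrix.mulVec, Fin.sum_univ_two] at h0 h1
    refine ⟨h0, h1, by nlinarith⟩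
  · rintro ⟨ha, hc, hb⟩
    rw [posDef_iff_dotProduct_mulVec]
    constructor
    · ext i j; fin_cases i <;> fin_cases j <;> simp [Matrix.conjTranspose_apply]
    · intro x hx
      have hx' : x 0 ≠ 0 ∨ x 1 ≠ 0 := by
        by_contra hcon
        push_neg at hcon
        apply hx
        ext i; fin_cases i <;> simp [hcon.1, hcon.2]
      have hq : dotProduct (star x) ((!![a,b;b,c] : M2R) *ᵥ x)
          = a * x 0 ^ 2 + 2 * b * (x 0 * x 1) + c * x 1 ^ 2 := by
        simp [dotProduct, Matrix.mulVec, Fin.sum_univ_two]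
        ring
      rw [hq]
      rcases eq_or_ne (x 1) 0 with h1 | h1
      · have h0 : x 0 ≠ 0 := by tauto
        rw [h1]
        have : 0 < x 0 ^ 2 := by positivity
        nlinarith
      · have hs1 : 0 < x 1 ^ 2 := by positivity
        nlinarith [sq_nonneg (a * x 0 + b * x 1)]

lemma zpow_sqrt_mul (p : ℕ) (hp : 0 < p) (k : ℤ) :
    ((Real.sqrt p : ℝ):ℂ)^k * ((Real.sqrt p : ℝ):ℂ)^k = ((p:ℕ):ℂ)^k := by
  have hp0 : (0:ℝ) < (p:ℝ) := by exact_mod_cast hp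
  rw [← mul_zpow]
  congr 1
  exact_mod_cast Real.mul_self_sqrt hp0.le

lemma TpUp_eval (k : ℤ) (p : ℕ) (hp : 0 < p) (F : M2C → ℂ) (τ z τ' : ℂ) :
    TpUp k p F !![τ, (Real.sqrt p : ℂ) * z; (Real.sqrt p : ℂ) * z, τ'] =
      (p:ℂ) ^ (k - 1) * F !![(p:ℂ) * τ, (p:ℂ) * z; (p:ℂ) * z, τ']
        + (p:ℂ)⁻¹ * ∑ a : Fin p, F !![(τ + ((a:ℕ):ℂ)) / (p:ℂ), z; z, τ'] := by
  have hp0 : (0:ℝ) < (p:ℝ) := by exact_mod_cast hp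
  set s : ℝ := Real.sqrt p with hs
  have hs0 : 0 < s := Real.sqrt_pos.mpr hp0
  have hssR : s * s = (p:ℝ) := Real.mul_self_sqrt hp0.le
  have hsne : s ≠ 0 := hs0.ne'
  have hsC : ((s:ℝ):ℂ) ≠ 0 := by exact_mod_cast hsne
  have hss : ((s:ℝ):ℂ) * ((s:ℝ):ℂ) = (p:ℂ) := by exact_mod_cast hssR
  have hPC : ((p:ℕ):ℂ) ≠ 0 := by exact_mod_cast hp.ne'
  have hc : (p:ℝ) ^ (-(1:ℝ)/2) = s⁻¹ := by
    rw [show (-(1:ℝ)/2) = -(1/2) by ring, Real.rpow_neg hp0.le, ← Real.sqrt_eq_rpow]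
  have hcp : s⁻¹ * (p:ℝ) = s := by field_simp [← hssR]; rw [← hssR]; ring
  have hm1 : ((p:ℝ) ^ (-(1:ℝ)/2)) • (!![(p:ℝ), 0; 0, 1] : M2R) = !![s, 0; 0, s⁻¹] := by
    rw [hc, smul_fin2]; norm_num [hcp]
  have hm2 : ∀ a : Fin p, ((p:ℝ) ^ (-(1:ℝ)/2)) • (!![1, ((a:ℕ):ℝ); 0, (p:ℝ)] : M2R)
      = !![s⁻¹, s⁻¹*((a:ℕ):ℝ); 0, s] := by
    intro a; rw [hc, smul_fin2]; norm_num [hcp]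
  have e1 : slashOp k (embUp (((p:ℝ) ^ (-(1:ℝ)/2)) • !![(p:ℝ), 0; 0, 1])) F
        !![τ, (s:ℂ) * z; (s:ℂ) * z, τ']
      = ((s:ℂ))^k * F !![(p:ℂ) * τ, (p:ℂ) * z; (p:ℂ) * z, τ'] := by
    rw [embUp, hm1, slash_tri_up k s 0 s⁻¹ (inv_ne_zero hsne) F]
    congr 1
    · push_cast
      simp [_root_.zpow_neg, _root_.inv_zpow]
    · congr 1
      ext i j
      fin_cases i <;> fin_cases j <;> rw [← hss] <;> push_cast <;>
        field_simp <;> ring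
  have e2 : ∀ a : Fin p, slashOp k (embUp (((p:ℝ) ^ (-(1:ℝ)/2)) • !![1, ((a:ℕ):ℝ); 0, (p:ℝ)])) F
        !![τ, (s:ℂ) * z; (s:ℂ) * z, τ']
      = ((s:ℂ))^(-k) * F !![(τ + ((a:ℕ):ℂ)) / (p:ℂ), z; z, τ'] := by
    intro a
    rw [embUp, hm2 a, slash_tri_up k s⁻¹ (s⁻¹*((a:ℕ):ℝ)) s hsne F]
    congr 2
    ext i j
    fin_cases i <;> fin_cases j <;> rw [← hss] <;> push_cast <;>
      field_simp <;> ring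
  rw [TpUp, e1]
  rw [Finset.sum_congr rfl (fun a _ => e2 a)]
  rw [cpow_half_int k p hp, ← Finset.mul_sum]
  have hk1 : ((s:ℝ):ℂ)^k / (p:ℂ) * ((s:ℂ))^k = (p:ℂ)^(k-1) := by
    rw [div_mul_eq_mul_div, zpow_sqrt_mul p hp k, zpow_sub_one₀ hPC, div_eq_mul_inv]
  have hk2 : ((s:ℝ):ℂ)^k / (p:ℂ) * ((s:ℂ))^(-k) = (p:ℂ)⁻¹ := by
    rw [_root_.zpow_neg]
    field_simp
  rw [mul_add, ← mul_assoc, ← mul_assoc, hk1, hk2]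

lemma TpLow_eval (k : ℤ) (p : ℕ) (hp : 0 < p) (F : M2C → ℂ) (τ z τ' : ℂ) :
    TpLow k p F !![τ, (Real.sqrt p : ℂ) * z; (Real.sqrt p : ℂ) * z, τ'] =
      (p:ℂ) ^ (k - 1) * F !![τ, (p:ℂ) * z; (p:ℂ) * z, (p:ℂ) * τ']
        + (p:ℂ)⁻¹ * ∑ a : Fin p, F !![τ, z; z, (τ' + ((a:ℕ):ℂ)) / (p:ℂ)] := by
  have hp0 : (0:ℝ) < (p:ℝ) := by exact_mod_cast hp
  set s : ℝ := Real.sqrt p with hs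
  have hs0 : 0 < s := Real.sqrt_pos.mpr hp0
  have hssR : s * s = (p:ℝ) := Real.mul_self_sqrt hp0.le
  have hsne : s ≠ 0 := hs0.ne'
  have hsC : ((s:ℝ):ℂ) ≠ 0 := by exact_mod_cast hsne
  have hss : ((s:ℝ):ℂ) * ((s:ℝ):ℂ) = (p:ℂ) := by exact_mod_cast hssR
  have hPC : ((p:ℕ):ℂ) ≠ 0 := by exact_mod_cast hp.ne'
  have hc : (p:ℝ) ^ (-(1:ℝ)/2) = s⁻¹ := by
    rw [show (-(1:ℝ)/2) = -(1/2) by ring, Real.rpow_neg hp0.le, ← Real.sqrt_eq_rpow]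
  have hcp : s⁻¹ * (p:ℝ) = s := by field_simp [← hssR]; rw [← hssR]; ring
  have hm1 : ((p:ℝ) ^ (-(1:ℝ)/2)) • (!![(p:ℝ), 0; 0, 1] : M2R) = !![s, 0; 0, s⁻¹] := by
    rw [hc, smul_fin2]; norm_num [hcp]
  have hm2 : ∀ a : Fin p, ((p:ℝ) ^ (-(1:ℝ)/2)) • (!![1, ((a:ℕ):ℝ); 0, (p:ℝ)] : M2R)
      = !![s⁻¹, s⁻¹*((a:ℕ):ℝ); 0, s] := by
    intro a; rw [hc, smul_fin2]; norm_num [hcp]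
  have e1 : slashOp k (embLow (((p:ℝ) ^ (-(1:ℝ)/2)) • !![(p:ℝ), 0; 0, 1])) F
        !![τ, (s:ℂ) * z; (s:ℂ) * z, τ']
      = ((s:ℂ))^k * F !![τ, (p:ℂ) * z; (p:ℂ) * z, (p:ℂ) * τ'] := by
    rw [embLow, hm1, slash_tri_low k s 0 s⁻¹ (inv_ne_zero hsne) F]
    congr 1
    · push_cast
      simp [_root_.zpow_neg, _root_.inv_zpow]
    · congr 1
      ext i j
      fin_cases i <;> fin_cases j <;> rw [← hss] <;> push_cast <;>
        field_simp <;> ring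
  have e2 : ∀ a : Fin p, slashOp k (embLow (((p:ℝ) ^ (-(1:ℝ)/2)) • !![1, ((a:ℕ):ℝ); 0, (p:ℝ)])) F
        !![τ, (s:ℂ) * z; (s:ℂ) * z, τ']
      = ((s:ℂ))^(-k) * F !![τ, z; z, (τ' + ((a:ℕ):ℂ)) / (p:ℂ)] := by
    intro a
    rw [embLow, hm2 a, slash_tri_low k s⁻¹ (s⁻¹*((a:ℕ):ℝ)) s hsne F]
    congr 2
    ext i j
    fin_cases i <;> fin_cases j <;> rw [← hss] <;> push_cast <;>
      field_simp <;> ring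
  rw [TpLow, e1]
  rw [Finset.sum_congr rfl (fun a _ => e2 a)]
  rw [cpow_half_int k p hp, ← Finset.mul_sum]
  have hk1 : ((s:ℝ):ℂ)^k / (p:ℂ) * ((s:ℂ))^k = (p:ℂ)^(k-1) := by
    rw [div_mul_eq_mul_div, zpow_sqrt_mul p hp k, zpow_sub_one₀ hPC, div_eq_mul_inv]
  have hk2 : ((s:ℝ):ℂ)^k / (p:ℂ) * ((s:ℂ))^(-k) = (p:ℂ)⁻¹ := by
    rw [_root_.zpow_neg]
    field_simp
  rw [mul_add, ← mul_assoc, ← mul_assoc, hk1, hk2]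

lemma mem_SiegelH2_iff (τ w τ' : ℂ) :
    (!![τ,w;w,τ'] : M2C) ∈ SiegelH2 ↔ 0 < τ.im ∧ 0 < τ'.im ∧ w.im^2 < τ.im*τ'.im := by
  have hIm : ImM !![τ,w;w,τ'] = !![τ.im, w.im; w.im, τ'.im] := by
    ext i j; fin_cases i <;> fin_cases j <;> simp [ImM]
  have hsym : (!![τ,w;w,τ'] : M2C).IsSymm := by
    unfold Matrix.IsSymm
    ext i j; fin_cases i <;> fin_cases j <;> simp
  constructor
  · rintro ⟨-, hpd⟩
    rw [hIm, posdef_fin2_iff] at hpd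
    exact hpd
  · intro h
    exact ⟨hsym, by rw [hIm, posdef_fin2_iff]; exact h⟩

theorem strong_symmetry_criterion' (k : ℤ) (F : M2C → ℂ) (p : ℕ) (hp : p.Prime) :
    (∀ Z ∈ SiegelH2, TpUp k p F Z = TpLow k p F Z) ↔
    (∀ tau z tau' : ℂ, 0 < tau.im → 0 < tau'.im → (p : ℝ) * z.im ^ 2 < tau.im * tau'.im →
      (p : ℂ) ^ (k - 1) * F !![(p:ℂ) * tau, (p:ℂ) * z; (p:ℂ) * z, tau']
        + (p : ℂ)⁻¹ * ∑ lam : Fin p, F !![(tau + ((lam:ℕ):ℂ)) / (p:ℂ), z; z, tau']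
      = (p : ℂ) ^ (k - 1) * F !![tau, (p:ℂ) * z; (p:ℂ) * z, (p:ℂ) * tau']
        + (p : ℂ)⁻¹ * ∑ mu : Fin p, F !![tau, z; z, (tau' + ((mu:ℕ):ℂ)) / (p:ℂ)]) := by
  have hp0 : (0:ℝ) < (p:ℝ) := by exact_mod_cast hp.pos
  set s : ℝ := Real.sqrt p with hsdef
  have hs0 : 0 < s := Real.sqrt_pos.mpr hp0
  have hsne : s ≠ 0 := hs0.ne'
  have hsC : ((s:ℝ):ℂ) ≠ 0 := by exact_mod_cast hsne
  have hssR : s * s = (p:ℝ) := Real.mul_self_sqrt hp0.le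
  constructor
  · intro H τ z τ' h1 h2 h3
    have hmem : (!![τ, (s:ℂ)*z; (s:ℂ)*z, τ'] : M2C) ∈ SiegelH2 := by
      rw [mem_SiegelH2_iff]
      refine ⟨h1, h2, ?_⟩
      have him : ((s:ℂ)*z).im = s * z.im := by simp [Complex.mul_im]
      rw [him, mul_pow]
      calc s^2 * z.im^2 = (p:ℝ) * z.im^2 := by rw [pow_two, hssR]
        _ < τ.im * τ'.im := h3
    have key := H _ hmem
    rwa [TpUp_eval k p hp.pos F τ z τ', TpLow_eval k p hp.pos F τ z τ'] at key
  · intro H Z hZ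
    have hsym := hZ.1
    have h10 : Z = !![Z 0 0, Z 0 1; Z 0 1, Z 1 1] := by
      conv_lhs => rw [Matrix.eta_fin_two Z]
      rw [hsym.apply 0 1]
    rw [h10] at hZ
    rw [mem_SiegelH2_iff] at hZ
    obtain ⟨h1, h2, h3⟩ := hZ
    set z : ℂ := Z 0 1 / (s:ℂ) with hzdef
    have hw : (s:ℂ) * z = Z 0 1 := by
      rw [hzdef]; field_simp
    have him : z.im = (Z 0 1).im / s := by
      rw [hzdef, Complex.div_ofReal_im]
    have hcond : (p:ℝ) * z.im ^ 2 < (Z 0 0).im * (Z 1 1).im := by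
      have heq : (p:ℝ) * ((Z 0 1).im / s)^2 = (Z 0 1).im^2 := by
        rw [div_pow, pow_two s, hssR]
        field_simp
      rw [him, heq]
      exact h3
    have key := H (Z 0 0) z (Z 1 1) h1 h2 hcond
    rw [h10, ← hw, TpUp_eval k p hp.pos, TpLow_eval k p hp.pos]
    exact key


/-- for a `Γ₂`-modular function `F` of weight `k`, the strong symmetry
`F|T_p• = F|T_p_•` is equivalent to the explicit identity. -/
theorem strong_symmetry_criterion (k : ℤ) (hk : Even k) (F : M2C → ℂ)
    (hF : ∀ γ ∈ Sp2Z, ∀ Z ∈ SiegelH2, slashOp k γ F Z = F Z) (p : ℕ) (hp : p.Prime) :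
    (∀ Z ∈ SiegelH2, TpUp k p F Z = TpLow k p F Z) ↔
    (∀ tau z tau' : ℂ, 0 < tau.im → 0 < tau'.im → (p : ℝ) * z.im ^ 2 < tau.im * tau'.im →
      (p : ℂ) ^ (k - 1) * F !![(p:ℂ) * tau, (p:ℂ) * z; (p:ℂ) * z, tau']
        + (p : ℂ)⁻¹ * ∑ lam : Fin p, F !![(tau + ((lam:ℕ):ℂ)) / (p:ℂ), z; z, tau']
      = (p : ℂ) ^ (k - 1) * F !![tau, (p:ℂ) * z; (p:ℂ) * z, (p:ℂ) * tau']
        + (p : ℂ)⁻¹ * ∑ mu : Fin p, F !![tau, z; z, (tau' + ((mu:ℕ):ℂ)) / (p:ℂ)]) := by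
  exact strong_symmetry_criterion' k F p hp

end
end
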